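/- arXiv:2404.03552 — 8 statements merged into one kernel-verified Lean document; each statement's English description precedes it below -/
import Mathlib

section
/- Let α, β ∈ Q. Then ε(α,β)·ε(β,α)⁻¹ = (−1)^{⟨α,β⟩}. -/
/-- Let α, β ∈ Q. Then ε(α,β)·ε(β,α)⁻¹ = (−1)^{⟨α,β⟩}.
Q is the free abelian group `Fin m → ℤ` with basis `Pi.single i 1`, `B` the symmetric
even ℤ-bilinear form, and `ε` the bimultiplicative map with the prescribed values on
basis elements. -/
theorem statement0 (m : ℕ) (B : (Fin m → ℤ) → (Fin m → ℤ) → ℤ)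
    (hBsymm : ∀ a b, B a b = B b a)
    (hBaddl : ∀ a a' b, B (a + a') b = B a b + B a' b)
    (hBaddr : ∀ a b b', B a (b + b') = B a b + B a b')
    (hBeven : ∀ a, ∃ n : ℤ, B a a = 2 * n)
    (ε : (Fin m → ℤ) → (Fin m → ℤ) → ℂˣ)
    (hεl : ∀ a a' b, ε (a + a') b = ε a b * ε a' b)
    (hεr : ∀ a b b', ε a (b + b') = ε a b * ε a b')
    (hεval : ∀ i j : Fin m,
      ε (Pi.single i 1) (Pi.single j 1) =
        if i ≤ j then 1 else (-1 : ℂˣ) ^ B (Pi.single i 1) (Pi.single j 1))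
    (α β : Fin m → ℤ) :
    ε α β * (ε β α)⁻¹ = (-1 : ℂˣ) ^ B α β := by
  set φ : (Fin m → ℤ) → (Fin m → ℤ) → ℂˣ :=
    fun a b => ε a b * (ε b a)⁻¹ * ((-1 : ℂˣ) ^ B a b)⁻¹ with hφ
  have hsq : ∀ n : ℤ, (-1 : ℂˣ) ^ (2 * n) = 1 := by
    intro n
    rw [zpow_mul, zpow_two, neg_one_mul, neg_neg, one_zpow]
  have hinv : ∀ n : ℤ, ((-1 : ℂˣ) ^ n)⁻¹ = (-1 : ℂˣ) ^ n := by
    intro n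
    rw [← zpow_neg]
    have : (-1 : ℂˣ) ^ n = (-1 : ℂˣ) ^ (-n) * ((-1 : ℂˣ) ^ (2 * n)) := by
      rw [← zpow_add]; ring_nf
    rw [this, hsq, mul_one]
  have haddr : ∀ a b b', φ a (b + b') = φ a b * φ a b' := by
    intro a b b'
    simp only [hφ, hεr, hεl, hBaddr, zpow_add, mul_inv]
    simp only [mul_comm, mul_assoc, mul_left_comm]
  have haddl : ∀ a a' b, φ (a + a') b = φ a b * φ a' b := by
    intro a a' b
    simp only [hφ, hεr, hεl, hBaddl, zpow_add, mul_inv]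
    simp only [mul_comm, mul_assoc, mul_left_comm]
  have hbasis : ∀ i j : Fin m, φ (Pi.single i 1) (Pi.single j 1) = 1 := by
    intro i j
    rcases lt_trichotomy i j with h | h | h
    · have h1 : ε (Pi.single i 1) (Pi.single j 1) = 1 := by
        rw [hεval]; simp [h.le]
      have h2 : ε (Pi.single j 1) (Pi.single i 1) =
          (-1 : ℂˣ) ^ B (Pi.single i 1) (Pi.single j 1) := by
        rw [hεval, if_neg (by exact fun hc => absurd (le_antisymm hc h.le) h.ne'),
          hBsymm]
      rw [hφ]
      simp only [h1, h2, one_mul, hinv]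
      rw [← zpow_add, ← two_mul, hsq]
    · subst h
      have h1 : ε (Pi.single i 1) (Pi.single i 1) = 1 := by rw [hεval]; simp
      obtain ⟨n, hn⟩ := hBeven (Pi.single i 1)
      simp only [hφ, h1, hn, hsq]
      simp
    · have h1 : ε (Pi.single i 1) (Pi.single j 1) =
          (-1 : ℂˣ) ^ B (Pi.single i 1) (Pi.single j 1) := by
        rw [hεval, if_neg (by exact fun hc => absurd (le_antisymm hc h.le) h.ne')]
      have h2 : ε (Pi.single j 1) (Pi.single i 1) = 1 := by
        rw [hεval]; simp [h.le]
      simp only [hφ, h1, h2]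
      simp
  -- build the bilinear map into `Additive ℂˣ`
  let inner : (Fin m → ℤ) → (Fin m → ℤ) →ₗ[ℤ] Additive ℂˣ := fun a =>
    AddMonoidHom.toIntLinearMap <| AddMonoidHom.mk'
      (fun b => Additive.ofMul (φ a b)) (fun b b' => by
        simp only [haddr]; rfl)
  let ψ : (Fin m → ℤ) →ₗ[ℤ] (Fin m → ℤ) →ₗ[ℤ] Additive ℂˣ :=
    AddMonoidHom.toIntLinearMap <| AddMonoidHom.mk'
      (fun a => inner a) (fun a a' => by
        ext b
        simp only [inner, LinearMap.add_apply, AddMonoidHom.coe_toIntLinearMap,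
          AddMonoidHom.mk'_apply, haddl]
        rfl)
  have hψ : ψ = 0 := by
    apply (Pi.basisFun ℤ (Fin m)).ext
    intro i
    apply (Pi.basisFun ℤ (Fin m)).ext
    intro j
    simp only [Pi.basisFun_apply, ψ, inner, AddMonoidHom.coe_toIntLinearMap,
      AddMonoidHom.mk'_apply, LinearMap.zero_apply, hbasis]
    rfl
  have h := congrFun (congrArg (fun f => fun a b => (f a b : Additive ℂˣ)) hψ) α
  have h2 : Additive.ofMul (φ α β) = (0 : Additive ℂˣ) := congrFun h β
  have h3 : φ α β = 1 := h2
  rw [hφ] at h3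
  have := mul_inv_eq_one.mp h3
  exact this
end

section
/- Let W be a nonzero ℂ-vector space and for each i ∈ {1,…,m} let Z_i be an invertible ℂ-linear endomorphism of W, such that Z_i ∘ Z_j = (−1)^{⟨α_i,α_j⟩} · (Z_j ∘ Z_i) for all i, j. Then there exists a unique map e : Q → GL(W) (invertible ℂ-linear endomorphisms of W) such that e(α_i) = Z_i for all i ∈ {1,…,m} and e(α) ∘ e(β) = ε(α,β) · e(α+β) for all α, β ∈ Q. -/
namespace Statement1Aux

variable {m : ℕ}

/-- Ordered product of powers `Z i ^ α i` over a list of indices. -/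
def PL {G : Type*} [Group G] (Z : Fin m → G) : List (Fin m) → (Fin m → ℤ) → G
  | [], _ => 1
  | i :: L, α => Z i ^ α i * PL Z L α

/-- The scalar cocycle produced by reordering the product. -/
def fL (q : Fin m → Fin m → ℂˣ) : List (Fin m) → (Fin m → ℤ) → (Fin m → ℤ) → ℂˣ
  | [], _, _ => 1
  | i :: L, α, β => (L.map fun j => q j i ^ (α j * β i)).prod * fL q L α β

section Grp

variable {G : Type*} [Group G]

lemma conj_rel (s : ℂˣ →* G) (hcen : ∀ (c : ℂˣ) (g : G), s c * g = g * s c) {u v : G} {c : ℂˣ} (h : u * v = s c * (v * u)) (b : ℤ) :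
    u * v ^ b = s (c ^ b) * (v ^ b * u) := by
  have h1 : u * v * u⁻¹ = s c * v := by rw [h]; group
  have h3 := map_zpow (MulAut.conj u) v b
  simp only [MulAut.conj_apply] at h3
  rw [h1] at h3
  have hcom : Commute (s c) v := hcen c v
  have h4 : (s c * v) ^ b = s (c ^ b) * v ^ b := by
    rw [hcom.mul_zpow, map_zpow]
  rw [h4] at h3
  calc u * v ^ b = u * v ^ b * u⁻¹ * u := by group
    _ = s (c ^ b) * v ^ b * u := by rw [h3]
    _ = s (c ^ b) * (v ^ b * u) := by rw [mul_assoc]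

lemma pow_rel (s : ℂˣ →* G) (hcen : ∀ (c : ℂˣ) (g : G), s c * g = g * s c) {u v : G} {c : ℂˣ} (h : u * v = s c * (v * u)) (a b : ℤ) :
    u ^ a * v ^ b = s (c ^ (a * b)) * (v ^ b * u ^ a) := by
  have h1 := conj_rel s hcen h b
  have h2 : v ^ b * u = s ((c ^ b)⁻¹) * (u * v ^ b) := by
    rw [map_inv, h1, inv_mul_cancel_left]
  have h3 := conj_rel s hcen h2 a
  have hc : ((c ^ b)⁻¹) ^ a = (c ^ (a * b))⁻¹ := by
    rw [← zpow_neg, ← zpow_mul, ← zpow_neg]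
    congr 1; ring
  rw [h3, hc, ← mul_assoc, ← map_mul, mul_inv_cancel, map_one, one_mul]

lemma rel_ext (s : ℂˣ →* G) {u v : G} {c : ℂˣ} (h : u * v = s c * (v * u)) (x : G) :
    u * (v * x) = s c * (v * (u * x)) := by
  rw [← mul_assoc, h, mul_assoc, mul_assoc]

lemma scen (s : ℂˣ →* G) (hcen : ∀ (c : ℂˣ) (g : G), s c * g = g * s c) (c : ℂˣ) (x y : G) : x * (s c * y) = s c * (x * y) := by
  rw [← mul_assoc, ← hcen, mul_assoc]

lemma move (s : ℂˣ →* G) (hcen : ∀ (c : ℂˣ) (g : G), s c * g = g * s c) (Z : Fin m → G) (q : Fin m → Fin m → ℂˣ)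
    (hZq : ∀ i j, Z i * Z j = s (q i j) * (Z j * Z i)) :
    ∀ (L : List (Fin m)) (α : Fin m → ℤ) (i : Fin m) (b : ℤ),
      PL Z L α * Z i ^ b =
        s ((L.map fun j => q j i ^ (α j * b)).prod) * (Z i ^ b * PL Z L α)
  | [], α, i, b => by simp [PL]
  | j :: L, α, i, b => by
    have ih := move s hcen Z q hZq L α i b
    have hji := pow_rel s hcen (hZq j i) (α j) b
    simp only [PL, List.map_cons, List.prod_cons, mul_assoc]
    rw [ih, scen s hcen, rel_ext s hji, ← mul_assoc, ← map_mul,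
      mul_comm ((List.map (fun j => q j i ^ (α j * b)) L).prod)]

lemma cocycle (s : ℂˣ →* G) (hcen : ∀ (c : ℂˣ) (g : G), s c * g = g * s c) (Z : Fin m → G) (q : Fin m → Fin m → ℂˣ)
    (hZq : ∀ i j, Z i * Z j = s (q i j) * (Z j * Z i)) :
    ∀ (L : List (Fin m)) (α β : Fin m → ℤ),
      PL Z L α * PL Z L β = s (fL q L α β) * PL Z L (α + β)
  | [], α, β => by simp [PL, fL]
  | i :: L, α, β => by
    have ih := cocycle s hcen Z q hZq L α β
    have hmv := move s hcen Z q hZq L α i (β i)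
    simp only [PL, fL, Pi.add_apply, mul_assoc]
    rw [rel_ext s hmv, scen s hcen, ih, scen s hcen, scen s hcen,
      ← mul_assoc (Z i ^ α i), ← zpow_add, ← mul_assoc, ← map_mul]

end Grp

lemma fL_add_left (q : Fin m → Fin m → ℂˣ) :
    ∀ (L : List (Fin m)) (α α' β : Fin m → ℤ),
      fL q L (α + α') β = fL q L α β * fL q L α' β
  | [], _, _, _ => by simp [fL]
  | i :: L, α, α', β => by
    simp only [fL, fL_add_left q L α α' β, Pi.add_apply, add_mul, zpow_add,
      List.prod_map_mul]
    rw [mul_mul_mul_comm]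

lemma fL_add_right (q : Fin m → Fin m → ℂˣ) :
    ∀ (L : List (Fin m)) (α β β' : Fin m → ℤ),
      fL q L α (β + β') = fL q L α β * fL q L α β'
  | [], _, _, _ => by simp [fL]
  | i :: L, α, β, β' => by
    simp only [fL, fL_add_right q L α β β', Pi.add_apply, mul_add, zpow_add,
      List.prod_map_mul]
    rw [mul_mul_mul_comm]

lemma prod_single_pow {H : Type*} [Group H] (g : Fin m → H) (i : Fin m) :
    ∀ L : List (Fin m), L.Nodup →
      (L.map fun k => g k ^ ((Pi.single i 1 : Fin m → ℤ) k)).prod =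
        if i ∈ L then g i else 1
  | [], _ => by simp
  | k :: L, h => by
    obtain ⟨hk, hL⟩ := List.nodup_cons.mp h
    rw [List.map_cons, List.prod_cons, prod_single_pow g i L hL]
    rcases eq_or_ne k i with rfl | hki
    · simp [Pi.single_eq_same, hk]
    · have h0 : (Pi.single i 1 : Fin m → ℤ) k = 0 := Pi.single_eq_of_ne hki 1
      simp [h0, List.mem_cons, hki.symm]

lemma PL_eq_prod {G : Type*} [Group G] (Z : Fin m → G) (L : List (Fin m))
    (α : Fin m → ℤ) : PL Z L α = (L.map fun k => Z k ^ α k).prod := by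
  induction L <;> simp [PL, *]

lemma PL_single {G : Type*} [Group G] (Z : Fin m → G) (i : Fin m)
    (L : List (Fin m)) (h : L.Nodup) :
    PL Z L (Pi.single i 1) = if i ∈ L then Z i else 1 := by
  rw [PL_eq_prod]; exact prod_single_pow Z i L h

lemma fL_single (q : Fin m → Fin m → ℂˣ) (i j : Fin m) :
    ∀ L : List (Fin m), List.Pairwise (· < ·) L →
      fL q L (Pi.single i 1) (Pi.single j 1) =
        if j ∈ L ∧ j < i ∧ i ∈ L then q i j else 1
  | [], _ => by simp [fL]
  | k :: L, hp => by
    obtain ⟨hk, hL⟩ := List.pairwise_cons.mp hp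
    have hnd : L.Nodup := hL.nodup
    rw [fL, fL_single q i j L hL]
    rcases eq_or_ne k j with rfl | hkj
    · have hkL : k ∉ L := fun hmem => lt_irrefl k (hk k hmem)
      simp only [Pi.single_eq_same, mul_one]
      rw [prod_single_pow (fun a => q a k) i L hnd]
      have hiff : (i ∈ L) ↔ (k ∈ k :: L ∧ k < i ∧ i ∈ k :: L) := by
        constructor
        · intro hi
          exact ⟨List.mem_cons_self, hk i hi, List.mem_cons_of_mem _ hi⟩
        · rintro ⟨-, hki, hic⟩
          rcases List.mem_cons.mp hic with rfl | hi
          · exact absurd hki (lt_irrefl i)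
          · exact hi
      simp only [hkL, false_and, if_false, mul_one]
      rw [if_congr hiff rfl rfl]
    · have h0 : (Pi.single j 1 : Fin m → ℤ) k = 0 := Pi.single_eq_of_ne hkj 1
      simp only [h0, mul_zero, zpow_zero]
      have hone : (L.map fun _ => (1 : ℂˣ)).prod = 1 := by simp
      rw [hone, one_mul]
      have hiff : (j ∈ L ∧ j < i ∧ i ∈ L) ↔
          (j ∈ k :: L ∧ j < i ∧ i ∈ k :: L) := by
        constructor
        · rintro ⟨h1, h2, h3⟩
          exact ⟨List.mem_cons_of_mem _ h1, h2, List.mem_cons_of_mem _ h3⟩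
        · rintro ⟨h1, h2, h3⟩
          have hj : j ∈ L := by
            rcases List.mem_cons.mp h1 with h | h
            · exact absurd h.symm hkj
            · exact h
          refine ⟨hj, h2, ?_⟩
          rcases List.mem_cons.mp h3 with rfl | h
          · exact absurd (h2.trans (hk j hj)) (lt_irrefl _)
          · exact h
      rw [if_congr hiff rfl rfl]

lemma mem_all (S : AddSubgroup (Fin m → ℤ))
    (h : ∀ i, (Pi.single i 1 : Fin m → ℤ) ∈ S) : ∀ a, a ∈ S := by
  intro a
  have ha : a = ∑ i : Fin m, a i • (Pi.single i 1 : Fin m → ℤ) := by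
    funext j
    rw [Finset.sum_apply]
    simp only [Pi.smul_apply, Pi.single_apply, smul_eq_mul, mul_ite, mul_one,
      mul_zero]
    rw [Finset.sum_ite_eq]
    simp
  rw [ha]
  exact AddSubgroup.sum_mem S fun i _ => AddSubgroup.zsmul_mem S (h i) (a i)

lemma add0 {g : (Fin m → ℤ) → ℂˣ} (hg : ∀ b b', g (b + b') = g b * g b') :
    g 0 = 1 ∧ ∀ b, g (-b) = (g b)⁻¹ := by
  have h0 : g 0 = 1 := by
    have := hg 0 0
    rw [add_zero] at this
    exact (left_eq_mul.mp this)
  refine ⟨h0, fun b => ?_⟩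
  have := hg b (-b)
  rw [add_neg_cancel, h0] at this
  exact (inv_eq_of_mul_eq_one_right this.symm).symm

lemma onevar_ext {g h : (Fin m → ℤ) → ℂˣ}
    (hg : ∀ b b', g (b + b') = g b * g b')
    (hh : ∀ b b', h (b + b') = h b * h b')
    (hs : ∀ i, g (Pi.single i 1) = h (Pi.single i 1)) : ∀ b, g b = h b := by
  obtain ⟨hg0, hgneg⟩ := add0 hg
  obtain ⟨hh0, hhneg⟩ := add0 hh
  let T : AddSubgroup (Fin m → ℤ) :=
    { carrier := {b | g b = h b}
      zero_mem' := by simp only [Set.mem_setOf_eq]; rw [hg0, hh0]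
      add_mem' := by
        intro x y hx hy
        simp only [Set.mem_setOf_eq] at *
        rw [hg, hh, hx, hy]
      neg_mem' := by
        intro x hx
        simp only [Set.mem_setOf_eq] at *
        rw [hgneg, hhneg, hx] }
  exact fun b => mem_all T hs b

lemma bimul_ext {g h : (Fin m → ℤ) → (Fin m → ℤ) → ℂˣ}
    (gl : ∀ a a' b, g (a + a') b = g a b * g a' b)
    (gr : ∀ a b b', g a (b + b') = g a b * g a b')
    (hl : ∀ a a' b, h (a + a') b = h a b * h a' b)
    (hr : ∀ a b b', h a (b + b') = h a b * h a b')
    (hs : ∀ i j, g (Pi.single i 1) (Pi.single j 1) =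
      h (Pi.single i 1) (Pi.single j 1)) :
    ∀ a b, g a b = h a b := by
  have step1 : ∀ (i : Fin m) (b), g (Pi.single i 1) b = h (Pi.single i 1) b :=
    fun i => onevar_ext (fun b b' => gr _ b b') (fun b b' => hr _ b b')
      (fun j => hs i j)
  intro a b
  exact onevar_ext (g := fun x => g x b) (h := fun x => h x b)
    (fun x x' => gl x x' b) (fun x x' => hl x x' b) (fun i => step1 i b) a

end Statement1Aux

/-- Given a nonzero ℂ-vector space `W` and invertible endomorphisms
`Z i` with `Z i ∘ Z j = (−1)^{⟨α_i,α_j⟩} Z j ∘ Z i`, there is a unique map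
`e : Q → GL(W)` with `e (α_i) = Z i` and `e α ∘ e β = ε(α,β) • e (α+β)`. -/
theorem statement1 (m : ℕ) (B : (Fin m → ℤ) → (Fin m → ℤ) → ℤ)
    (hBsymm : ∀ a b, B a b = B b a)
    (hBaddl : ∀ a a' b, B (a + a') b = B a b + B a' b)
    (hBaddr : ∀ a b b', B a (b + b') = B a b + B a b')
    (hBeven : ∀ a, ∃ n : ℤ, B a a = 2 * n)
    (ε : (Fin m → ℤ) → (Fin m → ℤ) → ℂˣ)
    (hεl : ∀ a a' b, ε (a + a') b = ε a b * ε a' b)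
    (hεr : ∀ a b b', ε a (b + b') = ε a b * ε a b')
    (hεval : ∀ i j : Fin m,
      ε (Pi.single i 1) (Pi.single j 1) =
        if i ≤ j then 1 else (-1 : ℂˣ) ^ B (Pi.single i 1) (Pi.single j 1))
    (W : Type*) [AddCommGroup W] [Module ℂ W] [Nontrivial W]
    (Z : Fin m → (Module.End ℂ W)ˣ)
    (hZ : ∀ i j : Fin m, (Z i : Module.End ℂ W) * (Z j : Module.End ℂ W) =
      ((-1 : ℂ) ^ B (Pi.single i 1) (Pi.single j 1)) •
        ((Z j : Module.End ℂ W) * (Z i : Module.End ℂ W))) :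
    ∃! e : (Fin m → ℤ) → (Module.End ℂ W)ˣ,
      (∀ i : Fin m, e (Pi.single i 1) = Z i) ∧
      (∀ α β : Fin m → ℤ, (e α : Module.End ℂ W) * (e β : Module.End ℂ W) =
        (ε α β : ℂ) • (e (α + β) : Module.End ℂ W)) := by
  classical
  let s : ℂˣ →* (Module.End ℂ W)ˣ := Units.map (algebraMap ℂ (Module.End ℂ W)).toMonoidHom
  have hsval : ∀ c : ℂˣ, ((s c : (Module.End ℂ W)ˣ) : Module.End ℂ W)
      = algebraMap ℂ (Module.End ℂ W) (c : ℂ) := fun c => rfl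
  have hcen : ∀ (c : ℂˣ) (g : (Module.End ℂ W)ˣ), s c * g = g * s c := by
    intro c g
    apply Units.ext
    rw [Units.val_mul, Units.val_mul, hsval]
    exact Algebra.commutes (c : ℂ) (g : Module.End ℂ W)
  have hconv : ∀ (u v w : (Module.End ℂ W)ˣ) (c : ℂˣ),
      u * v = s c * w ↔
        (u : Module.End ℂ W) * (v : Module.End ℂ W)
          = (c : ℂ) • (w : Module.End ℂ W) := by
    intro u v w c
    rw [Algebra.smul_def]
    constructor
    · intro h
      have := congrArg Units.val h
      rw [Units.val_mul, Units.val_mul, hsval] at this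
      exact this
    · intro h
      apply Units.ext
      rw [Units.val_mul, Units.val_mul, hsval]
      exact h
  let q : Fin m → Fin m → ℂˣ :=
    fun i j => (-1 : ℂˣ) ^ B (Pi.single i 1) (Pi.single j 1)
  have hqval : ∀ i j, ((q i j : ℂˣ) : ℂ)
      = (-1 : ℂ) ^ B (Pi.single i 1) (Pi.single j 1) := by
    intro i j
    simp [q, Units.val_zpow_eq_zpow_val]
  have hZ' : ∀ i j, Z i * Z j = s (q i j) * (Z j * Z i) := by
    intro i j
    rw [hconv, hqval]
    exact hZ i j
  -- the candidate map
  set e₀ : (Fin m → ℤ) → (Module.End ℂ W)ˣ :=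
    fun α => Statement1Aux.PL Z (List.finRange m) α with he₀
  have hE1 : ∀ i, e₀ (Pi.single i 1) = Z i := by
    intro i
    show Statement1Aux.PL Z (List.finRange m) (Pi.single i 1) = Z i
    rw [Statement1Aux.PL_single Z i _ (List.nodup_finRange m)]
    simp [List.mem_finRange]
  -- identify the cocycle with ε
  have hfε : ∀ α β, Statement1Aux.fL q (List.finRange m) α β = ε α β := by
    apply Statement1Aux.bimul_ext
    · exact fun a a' b => Statement1Aux.fL_add_left q _ a a' b
    · exact fun a b b' => Statement1Aux.fL_add_right q _ a b b'
    · exact hεl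
    · exact hεr
    · intro i j
      rw [Statement1Aux.fL_single q i j _ (List.pairwise_lt_finRange m), hεval]
      simp only [List.mem_finRange, true_and, and_true]
      by_cases hij : i ≤ j
      · rw [if_neg (by exact not_lt.mpr hij), if_pos hij]
      · rw [if_pos (not_le.mp hij), if_neg hij]
  have hcocε : ∀ α β, e₀ α * e₀ β = s (ε α β) * e₀ (α + β) := by
    intro α β
    rw [← hfε]
    exact Statement1Aux.cocycle s hcen Z q hZ' (List.finRange m) α β
  -- ε 0 0 = 1
  have hε00 : ε 0 0 = 1 := by
    have := hεl 0 0 0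
    rw [add_zero] at this
    exact left_eq_mul.mp this
  have hsolzero : ∀ f : (Fin m → ℤ) → (Module.End ℂ W)ˣ,
      (∀ α β, f α * f β = s (ε α β) * f (α + β)) → f 0 = 1 := by
    intro f hf
    have h := hf 0 0
    rw [add_zero, hε00, map_one, one_mul] at h
    exact mul_eq_right.mp h
  refine ⟨e₀, ⟨hE1, fun α β => (hconv _ _ _ _).mp (hcocε α β)⟩, ?_⟩
  rintro e' ⟨he'1, he'2⟩
  have he'2u : ∀ α β, e' α * e' β = s (ε α β) * e' (α + β) :=
    fun α β => (hconv _ _ _ _).mpr (he'2 α β)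
  have hz' : e' 0 = 1 := hsolzero e' he'2u
  have hz0 : e₀ 0 = 1 := hsolzero e₀ hcocε
  let S : AddSubgroup (Fin m → ℤ) :=
    { carrier := {α | e' α = e₀ α}
      zero_mem' := by
        simp only [Set.mem_setOf_eq]
        rw [hz', hz0]
      add_mem' := by
        intro a b ha hb
        simp only [Set.mem_setOf_eq] at *
        have h1 := he'2u a b
        have h2 := hcocε a b
        rw [ha, hb] at h1
        exact mul_left_cancel (h1.symm.trans h2)
      neg_mem' := by
        intro a ha
        simp only [Set.mem_setOf_eq] at *
        have h1 := he'2u a (-a)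
        have h2 := hcocε a (-a)
        rw [add_neg_cancel, hz'] at h1
        rw [add_neg_cancel, hz0] at h2
        rw [ha] at h1
        exact mul_left_cancel (h1.trans h2.symm) }
  have hsingle : ∀ i, (Pi.single i 1 : Fin m → ℤ) ∈ S := by
    intro i
    show e' (Pi.single i 1) = e₀ (Pi.single i 1)
    rw [he'1 i, hE1 i]
  funext α
  exact Statement1Aux.mem_all S hsingle α
end

section
/- Let C = (c_{ij})_{i,j∈ℕ} be a lower unitriangular matrix with entries in ℂ[[ℏ]] satisfying conditions (C1) and (C2), and let D = (d_{ij}) be its (lower unitriangular) inverse, i.e. Σ_k c_{ik} d_{kj} = δ_{ij} = Σ_k d_{ik} c_{kj} for all i, j. Then D also satisfies conditions (C1) and (C2). -/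
/-- If a lower unitriangular matrix `c` over ℂ[[ℏ]] satisfies (C1) and
(C2), then so does its lower unitriangular inverse `d`. -/
theorem statement3 (c d : ℕ → ℕ → PowerSeries ℂ)
    (hc_diag : ∀ i, c i i = 1) (hc_tri : ∀ i j, i < j → c i j = 0)
    (hd_diag : ∀ i, d i i = 1) (hd_tri : ∀ i j, i < j → d i j = 0)
    (hinv1 : ∀ i j, ∑ k ∈ Finset.Icc j i, c i k * d k j = if i = j then 1 else 0)
    (hinv2 : ∀ i j, ∑ k ∈ Finset.Icc j i, d i k * c k j = if i = j then 1 else 0)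
    (hC1 : ∀ i j, j < i → PowerSeries.X ∣ c i j)
    (hC2 : ∀ N : ℕ, ∃ k : ℕ, ∀ i j, j + k < i → PowerSeries.X ^ N ∣ c i j) :
    (∀ i j, j < i → PowerSeries.X ∣ d i j) ∧
    (∀ N : ℕ, ∃ k : ℕ, ∀ i j, j + k < i → PowerSeries.X ^ N ∣ d i j) := by
  have key : ∀ i j, j < i → d i j = -∑ k ∈ Finset.Icc j (i - 1), c i k * d k j := by
    intro i j hji
    obtain ⟨m, rfl⟩ : ∃ m, i = m + 1 := ⟨i - 1, by omega⟩
    have h := hinv1 (m + 1) j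
    rw [if_neg (by omega), Finset.sum_Icc_succ_top (by omega : j ≤ m + 1),
      hc_diag, one_mul] at h
    simp only [Nat.add_sub_cancel]
    linear_combination h
  constructor
  · intro i j hji
    rw [key i j hji]
    refine dvd_neg.mpr (Finset.dvd_sum ?_)
    intro k hk
    exact Dvd.dvd.mul_right (hC1 i k (by simp [Finset.mem_Icc] at hk; omega)) _
  · intro N
    induction N with
    | zero => exact ⟨0, fun i j _ => by simp⟩
    | succ N ih =>
      obtain ⟨Kd, hKd⟩ := ih
      obtain ⟨Kc, hKc⟩ := hC2 (N + 1)
      refine ⟨Kc + Kd, fun i j h => ?_⟩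
      have hji : j < i := by omega
      rw [key i j hji]
      refine dvd_neg.mpr (Finset.dvd_sum ?_)
      intro k hk
      simp only [Finset.mem_Icc] at hk
      by_cases hcase : k + Kc < i
      · exact Dvd.dvd.mul_right (hKc i k hcase) _
      · have h1 : PowerSeries.X ∣ c i k := hC1 i k (by omega)
        have h2 : PowerSeries.X ^ N ∣ d k j := hKd k j (by omega)
        calc PowerSeries.X ^ (N + 1) = PowerSeries.X * PowerSeries.X ^ N := by
              rw [pow_succ, mul_comm]
          _ ∣ c i k * d k j := mul_dvd_mul h1 h2
end

section
/- Let C = (c_{ij})_{i,j∈ℕ} be a lower unitriangular matrix with entries in ℂ[[ℏ]] satisfying conditions (C1) and (C2), let V be a module over ℂ[[ℏ]], and let x, y : ℕ → V be sequences with Σ_{j≤i} c_{ij} • x_j = y_i for all i ∈ ℕ. If for every N ∈ ℕ there exists k ∈ ℕ such that y_i ∈ ℏ^N V for all i ≥ k, then for every N ∈ ℕ there exists k ∈ ℕ such that x_i ∈ ℏ^N V for all i ≥ k. -/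
/-- If `c` is lower unitriangular over ℂ[[ℏ]] satisfying (C1), (C2),
`Σ_{j≤i} c i j • x j = y i`, and the `y i` eventually lie in `ℏ^N V` for each `N`,
then so do the `x i`. -/
theorem statement5 (c : ℕ → ℕ → PowerSeries ℂ)
    (hdiag : ∀ i, c i i = 1) (htri : ∀ i j, i < j → c i j = 0)
    (hC1 : ∀ i j, j < i → PowerSeries.X ∣ c i j)
    (hC2 : ∀ N : ℕ, ∃ k : ℕ, ∀ i j, j + k < i → PowerSeries.X ^ N ∣ c i j)
    (V : Type*) [AddCommGroup V] [Module (PowerSeries ℂ) V]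
    (x y : ℕ → V)
    (hxy : ∀ i, ∑ j ∈ Finset.Iic i, c i j • x j = y i)
    (hy : ∀ N : ℕ, ∃ k : ℕ, ∀ i, k ≤ i → ∃ v : V, y i = (PowerSeries.X ^ N : PowerSeries ℂ) • v) :
    ∀ N : ℕ, ∃ k : ℕ, ∀ i, k ≤ i → ∃ v : V, x i = (PowerSeries.X ^ N : PowerSeries ℂ) • v := by
  intro N
  induction N with
  | zero =>
    exact ⟨0, fun i _ => ⟨x i, by simp⟩⟩
  | succ N ih =>
    obtain ⟨kx, hkx⟩ := ih
    obtain ⟨ky, hky⟩ := hy (N + 1)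
    obtain ⟨k2, hk2⟩ := hC2 (N + 1)
    refine ⟨max ky (kx + k2 + 1), fun i hi => ?_⟩
    set P : Submodule (PowerSeries ℂ) V :=
      LinearMap.range (LinearMap.lsmul (PowerSeries ℂ) V (PowerSeries.X ^ (N + 1))) with hP
    have hmem : ∀ w : V, w ∈ P ↔ ∃ v : V, w = (PowerSeries.X ^ (N + 1) : PowerSeries ℂ) • v := by
      intro w
      constructor
      · rintro ⟨v, hv⟩; exact ⟨v, hv.symm⟩
      · rintro ⟨v, hv⟩; exact ⟨v, hv.symm⟩
    rw [← hmem]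
    -- x i = y i - ∑_{j < i} c i j • x j
    have hxi : x i = y i - ∑ j ∈ Finset.Iio i, c i j • x j := by
      have h := hxy i
      rw [← Finset.Iio_insert, Finset.sum_insert (by simp), hdiag i, one_smul] at h
      exact eq_sub_of_add_eq h
    rw [hxi]
    have hyi : y i ∈ P := by
      rw [hmem]
      exact hky i (le_trans (le_max_left _ _) hi)
    refine Submodule.sub_mem P hyi (Submodule.sum_mem P fun j hj => ?_)
    rw [Finset.mem_Iio] at hj
    by_cases hjk : j < kx
    · -- use hC2
      obtain ⟨d, hd⟩ := hk2 i j (by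
        have : max ky (kx + k2 + 1) ≤ i := hi
        omega)
      rw [hmem]
      exact ⟨d • x j, by rw [hd, mul_smul]⟩
    · -- x j ∈ X^N V and X ∣ c i j
      obtain ⟨v, hv⟩ := hkx j (le_of_not_gt hjk)
      obtain ⟨d, hd⟩ := hC1 i j hj
      rw [hmem]
      refine ⟨d • v, ?_⟩
      rw [hd, hv, smul_smul, smul_smul]
      ring_nf
end

section
/- Let W₀ be a nonzero ℂ-vector space, W = W₀[[ℏ]], and let S be a set of ℂ[[ℏ]]-linear endomorphisms of W. Each s ∈ S maps ℏW into ℏW and hence induces a ℂ-linear endomorphism of W/ℏW. Assume that the only ℂ-subspaces of W/ℏW invariant under all the induced endomorphisms (for s ∈ S) are 0 and W/ℏW. Then every nonzero ℂ[[ℏ]]-submodule N of W that is invariant under all s ∈ S, ℏ-saturated, and ℏ-adically closed is equal to W. -/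
/-- Let `W = W₀[[ℏ]]` with `W₀` nonzero, and `S` a set of ℂ[[ℏ]]-linear
endomorphisms of `W`. Assume the only ℂ-subspaces of `W/ℏW` invariant under all the
induced endomorphisms are `0` and `W/ℏW` (encoded: every subset `P` of `W` containing
`ℏW`, closed under addition, the ℂ-action and all `s ∈ S`, equals `ℏW` or `W`).
Then every nonzero `S`-invariant, ℏ-saturated, ℏ-adically closed ℂ[[ℏ]]-submodule
of `W` equals `W`. -/
theorem statement8 (W₀ : Type*) [AddCommGroup W₀] [Module ℂ W₀] [Nontrivial W₀]
    (W : Type*) [AddCommGroup W] [Module (PowerSeries ℂ) W]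
    (e : W ≃+ (ℕ → W₀))
    (hsmul : ∀ (f : PowerSeries ℂ) (w : W) (n : ℕ),
      e (f • w) n = ∑ k ∈ Finset.range (n + 1), PowerSeries.coeff (R := ℂ) k f • e w (n - k))
    (S : Set (Module.End (PowerSeries ℂ) W))
    (hirr : ∀ P : Set W,
      (∀ u : W, (PowerSeries.X : PowerSeries ℂ) • u ∈ P) →
      (∀ x ∈ P, ∀ y ∈ P, x + y ∈ P) →
      (∀ (c : ℂ), ∀ x ∈ P, PowerSeries.C (R := ℂ) c • x ∈ P) →
      (∀ s ∈ S, ∀ x ∈ P, s x ∈ P) →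
      (P = {w : W | ∃ u : W, w = (PowerSeries.X : PowerSeries ℂ) • u} ∨ P = Set.univ))
    (N : Submodule (PowerSeries ℂ) W) (hN0 : N ≠ ⊥)
    (hNS : ∀ s ∈ S, ∀ w ∈ N, s w ∈ N)
    (hsat : ∀ w : W, (PowerSeries.X : PowerSeries ℂ) • w ∈ N → w ∈ N)
    (hclosed : ∀ w : W,
      (∀ k : ℕ, ∃ n ∈ N, ∃ u : W, w - n = (PowerSeries.X ^ k : PowerSeries ℂ) • u) → w ∈ N) :
    N = ⊤ := by
  -- shift lemma
  have hX0 : ∀ w : W, e ((PowerSeries.X : PowerSeries ℂ) • w) 0 = 0 := by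
    intro w; rw [hsmul]; simp
  have hXs : ∀ w : W, ∀ n : ℕ, e ((PowerSeries.X : PowerSeries ℂ) • w) (n + 1) = e w n := by
    intro w n
    rw [hsmul, Finset.sum_eq_single 1]
    · simp
    · intro k _ hk1
      rw [PowerSeries.coeff_X, if_neg hk1, zero_smul]
    · intro h; exact absurd (Finset.mem_range.mpr (by omega)) h
  -- coefficients below k of X^k • w vanish
  have hpow : ∀ k : ℕ, ∀ w : W, ∀ n, n < k →
      e ((PowerSeries.X ^ k : PowerSeries ℂ) • w) n = 0 := by
    intro k
    induction k with
    | zero => intro w n hn; omega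
    | succ k ih =>
      intro w n hn
      have hrw : (PowerSeries.X ^ (k + 1) : PowerSeries ℂ) • w
          = (PowerSeries.X : PowerSeries ℂ) • ((PowerSeries.X ^ k : PowerSeries ℂ) • w) := by
        rw [← mul_smul, ← pow_succ']
      rw [hrw]
      cases n with
      | zero => exact hX0 _
      | succ n => rw [hXs]; exact ih _ n (by omega)
  set P : Set W := {w | ∃ n ∈ N, ∃ u : W, w = n + (PowerSeries.X : PowerSeries ℂ) • u} with hPdef
  have h1 : ∀ u : W, (PowerSeries.X : PowerSeries ℂ) • u ∈ P :=
    fun u => ⟨0, N.zero_mem, u, by rw [zero_add]⟩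
  have h2 : ∀ x ∈ P, ∀ y ∈ P, x + y ∈ P := by
    rintro x ⟨n, hn, u, rfl⟩ y ⟨m, hm, v, rfl⟩
    exact ⟨n + m, N.add_mem hn hm, u + v, by rw [smul_add]; abel⟩
  have h3 : ∀ (c : ℂ), ∀ x ∈ P, PowerSeries.C (R := ℂ) c • x ∈ P := by
    rintro c x ⟨n, hn, u, rfl⟩
    refine ⟨PowerSeries.C (R := ℂ) c • n, N.smul_mem _ hn, PowerSeries.C (R := ℂ) c • u, ?_⟩
    rw [smul_add, smul_smul, smul_smul, mul_comm]
  have h4 : ∀ s ∈ S, ∀ x ∈ P, s x ∈ P := by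
    rintro s hs x ⟨n, hn, u, rfl⟩
    exact ⟨s n, hNS s hs n hn, s u, by rw [map_add, map_smul]⟩
  rcases hirr P h1 h2 h3 h4 with hcase | hcase
  · -- P = ℏW  ⇒  N = ⊥, contradiction
    exfalso
    apply hN0
    have key : ∀ k : ℕ, ∀ m ∈ N, ∃ u ∈ N, m = (PowerSeries.X ^ k : PowerSeries ℂ) • u := by
      intro k
      induction k with
      | zero => intro m hm; exact ⟨m, hm, by rw [pow_zero, one_smul]⟩
      | succ k ih =>
        intro m hm
        obtain ⟨u, hu, rfl⟩ := ih m hm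
        have huP : u ∈ P := ⟨u, hu, 0, by rw [smul_zero, add_zero]⟩
        rw [hcase] at huP
        obtain ⟨v, rfl⟩ := huP
        refine ⟨v, hsat v hu, ?_⟩
        rw [← mul_smul, ← pow_succ]
    rw [eq_bot_iff]
    intro m hm
    rw [Submodule.mem_bot]
    apply e.injective
    funext n
    obtain ⟨u, -, rfl⟩ := key (n + 1) m hm
    rw [map_zero, Pi.zero_apply]
    exact hpow (n + 1) u n (by omega)
  · -- P = univ  ⇒  N = ⊤
    rw [eq_top_iff]
    intro w _
    apply hclosed
    intro k
    induction k with
    | zero => exact ⟨0, N.zero_mem, w, by rw [pow_zero, one_smul, sub_zero]⟩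
    | succ k ih =>
      obtain ⟨n, hn, u, hu⟩ := ih
      have huP : u ∈ P := by rw [hcase]; trivial
      obtain ⟨n', hn', u', rfl⟩ := huP
      refine ⟨n + (PowerSeries.X ^ k : PowerSeries ℂ) • n',
        N.add_mem hn (N.smul_mem _ hn'), u', ?_⟩
      rw [sub_add_eq_sub_sub, hu, smul_add, add_sub_cancel_left, ← mul_smul, ← pow_succ]
end

section
/- Let W₀ be a ℂ-vector space, W = W₀[[ℏ]], and let N be a ℂ[[ℏ]]-submodule of W that is ℏ-saturated and ℏ-adically closed. Let N₀ be any ℂ-subspace of N such that N = N₀ ⊕ ℏN as ℂ-vector spaces. Then the map sending a sequence (xₙ)_{n∈ℕ} of elements of N₀ to the element Σₙ ℏⁿxₙ of W is injective, and its image is exactly N. -/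
/-- Let `N` be an ℏ-saturated, ℏ-adically closed ℂ[[ℏ]]-submodule of
`W = W₀[[ℏ]]` and `N₀` a ℂ-subspace of `N` with `N = N₀ ⊕ ℏN` (as ℂ-vector spaces).
Then the map `(xₙ) ↦ Σₙ ℏⁿxₙ` on sequences in `N₀` is injective with image exactly
`N`. The element `Σₙ ℏⁿxₙ` is the one whose m-th coefficient is
`Σ_{n≤m} (e (x n)) (m-n)`. -/
theorem statement9 (W₀ : Type*) [AddCommGroup W₀] [Module ℂ W₀]
    (W : Type*) [AddCommGroup W] [Module (PowerSeries ℂ) W]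
    (e : W ≃+ (ℕ → W₀))
    (hsmul : ∀ (f : PowerSeries ℂ) (w : W) (n : ℕ),
      e (f • w) n = ∑ k ∈ Finset.range (n + 1), PowerSeries.coeff (R := ℂ) k f • e w (n - k))
    (N : Submodule (PowerSeries ℂ) W)
    (hsat : ∀ w : W, (PowerSeries.X : PowerSeries ℂ) • w ∈ N → w ∈ N)
    (hclosed : ∀ w : W,
      (∀ k : ℕ, ∃ n ∈ N, ∃ u : W, w - n = (PowerSeries.X ^ k : PowerSeries ℂ) • u) → w ∈ N)
    (N₀ : Set W) (hN₀sub : ∀ x ∈ N₀, x ∈ N) (hN₀zero : (0 : W) ∈ N₀)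
    (hN₀add : ∀ x ∈ N₀, ∀ y ∈ N₀, x + y ∈ N₀)
    (hN₀smul : ∀ (c : ℂ), ∀ x ∈ N₀, PowerSeries.C (R := ℂ) c • x ∈ N₀)
    (hspan : ∀ w ∈ N, ∃ x ∈ N₀, ∃ u ∈ N, w = x + (PowerSeries.X : PowerSeries ℂ) • u)
    (hindep : ∀ x ∈ N₀, (∃ u ∈ N, x = (PowerSeries.X : PowerSeries ℂ) • u) → x = 0) :
    (∀ x y : ℕ → W, (∀ n, x n ∈ N₀) → (∀ n, y n ∈ N₀) →
      (∀ m : ℕ, ∑ n ∈ Finset.range (m + 1), e (x n) (m - n)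
        = ∑ n ∈ Finset.range (m + 1), e (y n) (m - n)) → x = y) ∧
    (∀ w : W, w ∈ N ↔ ∃ x : ℕ → W, (∀ n, x n ∈ N₀) ∧
      ∀ m : ℕ, e w m = ∑ n ∈ Finset.range (m + 1), e (x n) (m - n)) := by
  classical
  -- basic coefficient computations
  have heX : ∀ (w : W) (m : ℕ),
      e ((PowerSeries.X : PowerSeries ℂ) • w) m = if m = 0 then 0 else e w (m - 1) := by
    intro w m
    rw [hsmul]
    rcases m with _ | m
    · simp [PowerSeries.coeff_X]
    · rw [Finset.sum_eq_single 1]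
      · simp [PowerSeries.coeff_X]
      · intro k hk hk1
        simp [PowerSeries.coeff_X, hk1]
      · intro h
        simp at h
  have heXpow : ∀ (k : ℕ) (w : W) (m : ℕ),
      e ((PowerSeries.X ^ k : PowerSeries ℂ) • w) m = if k ≤ m then e w (m - k) else 0 := by
    intro k
    induction k with
    | zero => intro w m; simp
    | succ k ih =>
      intro w m
      rw [pow_succ, mul_smul, ih (PowerSeries.X • w) m]
      by_cases hkm : k ≤ m
      · rw [if_pos hkm, heX]
        by_cases h1 : k + 1 ≤ m
        · rw [if_pos h1, if_neg (by omega)]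
          congr 1 <;> omega
        · rw [if_neg h1, if_pos (by omega)]
      · rw [if_neg hkm, if_neg (by omega)]
  have hXzero : ∀ w : W, (PowerSeries.X : PowerSeries ℂ) • w = 0 → w = 0 := by
    intro w h
    apply e.injective
    funext m
    have := congrFun (congrArg e h) (m + 1)
    rw [heX] at this
    simpa using this
  have hN₀neg : ∀ x ∈ N₀, -x ∈ N₀ := by
    intro x hx
    have := hN₀smul (-1) x hx
    rwa [map_neg, map_one, neg_one_smul] at this
  -- the tail-sum operator
  obtain ⟨S, heS⟩ : ∃ S : (ℕ → W) → ℕ → W, ∀ (d : ℕ → W) (j m : ℕ),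
      e (S d j) m = ∑ n ∈ Finset.range (m + 1), e (d (n + j)) (m - n) :=
    ⟨fun d j => e.symm (fun m => ∑ n ∈ Finset.range (m + 1), e (d (n + j)) (m - n)),
      fun d j m => by simp⟩
  have hstep : ∀ (d : ℕ → W) (j : ℕ),
      S d j = d j + (PowerSeries.X : PowerSeries ℂ) • S d (j + 1) := by
    intro d j
    apply e.injective
    funext m
    rw [map_add, Pi.add_apply, heS, heX]
    rcases m with _ | m
    · simp
    · rw [if_neg (by omega), Finset.sum_range_succ', heS]
      simp only [Nat.succ_sub_succ, Nat.add_sub_cancel, Nat.sub_zero, Nat.zero_add]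
      rw [add_comm]
      congr 1
      apply Finset.sum_congr rfl
      intro n _
      have h1 : n + 1 + j = n + (j + 1) := by omega
      rw [h1]
  have hpartial : ∀ (d : ℕ → W) (j k : ℕ),
      S d j = (∑ n ∈ Finset.range k, (PowerSeries.X ^ n : PowerSeries ℂ) • d (n + j))
        + (PowerSeries.X ^ k : PowerSeries ℂ) • S d (j + k) := by
    intro d j k
    induction k generalizing j with
    | zero => simp
    | succ k ih =>
      have h1 : ∀ n : ℕ, n + 1 + j = n + (j + 1) := fun n => by omega
      have h2 : j + 1 + k = j + (k + 1) := by omega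
      rw [Finset.sum_range_succ']
      simp only [pow_zero, one_smul, Nat.zero_add]
      rw [hstep d j, ih (j + 1), smul_add, smul_smul, Finset.smul_sum]
      simp only [smul_smul, ← pow_succ', h1, h2]
      abel
  have hmem : ∀ (d : ℕ → W), (∀ n, d n ∈ N) → ∀ j, S d j ∈ N := by
    intro d hd j
    apply hclosed
    intro k
    refine ⟨∑ n ∈ Finset.range k, (PowerSeries.X ^ n : PowerSeries ℂ) • d (n + j),
      Submodule.sum_mem _ (fun n _ => Submodule.smul_mem _ _ (hd _)), S d (j + k), ?_⟩
    rw [hpartial d j k, add_sub_cancel_left]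
  constructor
  · -- injectivity
    intro x y hx hy hsum
    set d : ℕ → W := fun n => x n - y n with hd
    have hdN₀ : ∀ n, d n ∈ N₀ := by
      intro n
      have : x n + -(y n) ∈ N₀ := hN₀add _ (hx n) _ (hN₀neg _ (hy n))
      simpa [hd, sub_eq_add_neg] using this
    have hdN : ∀ n, d n ∈ N := fun n => hN₀sub _ (hdN₀ n)
    have hS0 : S d 0 = 0 := by
      apply e.injective
      funext m
      rw [heS]
      simp only [Nat.add_zero, hd, map_sub, Pi.sub_apply]
      rw [Finset.sum_sub_distrib, hsum m, sub_self]
      simp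
    have hSall : ∀ j, S d j = 0 := by
      intro j
      induction j with
      | zero => exact hS0
      | succ j ih =>
        have h1 : d j + (PowerSeries.X : PowerSeries ℂ) • S d (j + 1) = 0 := by
          rw [← hstep, ih]
        have hdj : d j = 0 := by
          apply hindep _ (hdN₀ j)
          refine ⟨-S d (j + 1), Submodule.neg_mem _ (hmem d hdN _), ?_⟩
          rw [smul_neg, eq_neg_iff_add_eq_zero.mpr h1]
        apply hXzero
        rw [hdj, zero_add] at h1
        exact h1
    have hdzero : ∀ j, d j = 0 := by
      intro j
      have := hstep d j
      rw [hSall j, hSall (j + 1), smul_zero, add_zero] at this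
      exact this.symm
    funext n
    have := hdzero n
    simpa [hd, sub_eq_zero] using this
  · -- image
    intro w
    constructor
    · intro hw
      choose xc hxc uc huc heqc using hspan
      obtain ⟨ws, hws0, hwsrec⟩ : ∃ ws : ℕ → {v : W // v ∈ N}, ws 0 = ⟨w, hw⟩ ∧
          ∀ j, ws (j + 1) = ⟨uc (ws j).1 (ws j).2, huc _ _⟩ :=
        ⟨fun j => Nat.rec ⟨w, hw⟩ (fun _ p => ⟨uc p.1 p.2, huc p.1 p.2⟩) j, rfl, fun j => rfl⟩
      set xs : ℕ → W := fun j => xc (ws j).1 (ws j).2 with hxs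
      have hxsN₀ : ∀ j, xs j ∈ N₀ := fun j => hxc _ _
      have hdecomp : ∀ j, (ws j).1 = xs j + (PowerSeries.X : PowerSeries ℂ) • (ws (j + 1)).1 := by
        intro j
        rw [hwsrec j]
        exact heqc _ _
      have hk : ∀ k, w = (∑ n ∈ Finset.range k, (PowerSeries.X ^ n : PowerSeries ℂ) • xs n)
          + (PowerSeries.X ^ k : PowerSeries ℂ) • (ws k).1 := by
        intro k
        induction k with
        | zero => simp [hws0]
        | succ k ih =>
          rw [ih, hdecomp k, Finset.sum_range_succ, smul_add, smul_smul, ← pow_succ]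
          abel
      refine ⟨xs, hxsN₀, ?_⟩
      intro m
      rw [hk (m + 1), map_add, Pi.add_apply, heXpow, if_neg (by omega), add_zero]
      rw [map_sum, Finset.sum_apply]
      apply Finset.sum_congr rfl
      intro n hn
      rw [heXpow, if_pos (by simp at hn; omega)]
    · rintro ⟨x, hxN₀, hcoef⟩
      have hwS : w = S x 0 := by
        apply e.injective
        funext m
        rw [heS, hcoef m]
        simp
      rw [hwS]
      exact hmem x (fun n => hN₀sub _ (hxN₀ n)) 0
end

section
/- Let A be a unital associative ℂ-algebra such that every A-module is semisimple. Let W₀ be a nonzero ℂ-vector space and suppose W = W₀[[ℏ]] carries an A-module structure extending its ℂ-vector space structure such that every a ∈ A acts as a ℂ[[ℏ]]-linear endomorphism of W. Assume that the only ℂ[[ℏ]]-submodules of W that are A-invariant, ℏ-saturated, and ℏ-adically closed are 0 and W. Then there exists an A-invariant ℂ-subspace M₀ of W such that M₀ is a simple A-module and the map sending a sequence (xₙ)_{n∈ℕ} of elements of M₀ to Σₙ ℏⁿxₙ is a bijection from such sequences onto W. -/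
open Finset

section Aux

variable {W₀ W : Type} [AddCommGroup W₀] [Module ℂ W₀]
  [AddCommGroup W] [Module (PowerSeries ℂ) W]
  {e : W ≃+ (ℕ → W₀)}

private lemma aux_coeff_Xpow
    (hsmul : ∀ (f : PowerSeries ℂ) (w : W) (n : ℕ),
      e (f • w) n = ∑ k ∈ Finset.range (n + 1), PowerSeries.coeff k f • e w (n - k))
    (w : W) (j n : ℕ) :
    e ((PowerSeries.X : PowerSeries ℂ) ^ j • w) n
      = if j ≤ n then e w (n - j) else 0 := by
  rw [hsmul]
  have h1 : ∀ k ∈ Finset.range (n+1),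
      (PowerSeries.coeff k ((PowerSeries.X : PowerSeries ℂ)^j)) • e w (n - k)
        = if k = j then e w (n - k) else 0 := by
    intro k _
    rw [PowerSeries.coeff_X_pow]
    split <;> simp
  rw [Finset.sum_congr rfl h1,
    Finset.sum_ite_eq' (Finset.range (n+1)) j (fun k => e w (n - k))]
  simp [Nat.lt_succ_iff]

private lemma aux_coeff_X
    (hsmul : ∀ (f : PowerSeries ℂ) (w : W) (n : ℕ),
      e (f • w) n = ∑ k ∈ Finset.range (n + 1), PowerSeries.coeff k f • e w (n - k))
    (w : W) (n : ℕ) :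
    e ((PowerSeries.X : PowerSeries ℂ) • w) n = if 1 ≤ n then e w (n - 1) else 0 := by
  have := aux_coeff_Xpow hsmul w 1 n
  rwa [pow_one] at this

private lemma aux_exists_Xpow
    (hsmul : ∀ (f : PowerSeries ℂ) (w : W) (n : ℕ),
      e (f • w) n = ∑ k ∈ Finset.range (n + 1), PowerSeries.coeff k f • e w (n - k))
    (w : W) (k : ℕ) (h : ∀ m < k, e w m = 0) :
    ∃ u, w = (PowerSeries.X : PowerSeries ℂ) ^ k • u := by
  refine ⟨e.symm (fun n => e w (n + k)), e.injective ?_⟩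
  funext n
  rw [aux_coeff_Xpow hsmul]
  by_cases hk : k ≤ n
  · rw [if_pos hk, e.apply_symm_apply]
    simp [Nat.sub_add_cancel hk]
  · rw [if_neg hk, h n (lt_of_not_ge hk)]

set_option linter.unusedSectionVars false in
private lemma aux_coeffs_eq (S : Set W)
    (hsub : ∀ x ∈ S, ∀ y ∈ S, x - y ∈ S)
    (hdisj : ∀ z ∈ S, e z 0 = 0 → z = 0)
    (x y : ℕ → W) (hx : ∀ n, x n ∈ S) (hy : ∀ n, y n ∈ S) (k : ℕ)
    (h : ∀ m < k, ∑ n ∈ Finset.range (m+1), e (x n) (m - n)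
      = ∑ n ∈ Finset.range (m+1), e (y n) (m - n)) :
    ∀ i < k, x i = y i := by
  intro i
  induction i using Nat.strong_induction_on with
  | _ i IH =>
    intro hik
    have h' := h i hik
    rw [Finset.sum_range_succ, Finset.sum_range_succ] at h'
    have hpre : ∑ n ∈ Finset.range i, e (x n) (i - n)
        = ∑ n ∈ Finset.range i, e (y n) (i - n) :=
      Finset.sum_congr rfl fun n hn => by
        rw [IH n (Finset.mem_range.mp hn) (lt_trans (Finset.mem_range.mp hn) hik)]
    rw [hpre, Nat.sub_self] at h'
    have h0 : e (x i) 0 = e (y i) 0 := add_left_cancel h'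
    have : x i - y i = 0 := hdisj _ (hsub _ (hx i) _ (hy i))
      (by rw [map_sub, Pi.sub_apply, h0, sub_self])
    exact sub_eq_zero.mp this

private lemma aux_rep_exists
    (hsmul : ∀ (f : PowerSeries ℂ) (w : W) (n : ℕ),
      e (f • w) n = ∑ k ∈ Finset.range (n + 1), PowerSeries.coeff k f • e w (n - k))
    (S : Set W)
    (hdec : ∀ w : W, ∃ p ∈ S, ∃ r : W, w = p + (PowerSeries.X : PowerSeries ℂ) • r) :
    ∀ w : W, ∃ x : ℕ → W, (∀ n, x n ∈ S) ∧
      ∀ m, e w m = ∑ n ∈ Finset.range (m+1), e (x n) (m - n) := by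
  classical
  choose p hp r hr using hdec
  have key : ∀ m (w : W), e w m = ∑ n ∈ Finset.range (m+1), e (p (r^[n] w)) (m - n) := by
    intro m
    induction m with
    | zero =>
      intro w
      rw [Finset.sum_range_one]
      conv_lhs => rw [hr w]
      rw [map_add, Pi.add_apply, aux_coeff_X hsmul]
      simp
    | succ m IH =>
      intro w
      conv_lhs => rw [hr w]
      rw [map_add, Pi.add_apply, aux_coeff_X hsmul,
        if_pos (Nat.succ_le_succ (Nat.zero_le m)), Nat.succ_sub_one, IH (r w)]
      conv_rhs => rw [Finset.sum_range_succ']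
      simp only [Function.iterate_succ_apply, Function.iterate_zero_apply,
        Nat.succ_sub_succ, Nat.sub_zero]
      exact add_comm _ _
  exact fun w => ⟨fun n => p (r^[n] w), fun n => hp _, fun m => key m w⟩

private lemma aux_rep_glin
    (hsmul : ∀ (f : PowerSeries ℂ) (w : W) (n : ℕ),
      e (f • w) n = ∑ k ∈ Finset.range (n + 1), PowerSeries.coeff k f • e w (n - k))
    (g : W →ₗ[PowerSeries ℂ] W) (x : ℕ → W) (w : W)
    (hrep : ∀ m, e w m = ∑ n ∈ Finset.range (m+1), e (x n) (m - n)) (m : ℕ) :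
    e (g w) m = ∑ n ∈ Finset.range (m+1), e (g (x n)) (m - n) := by
  classical
  set s : W := ∑ n ∈ Finset.range (m+1), (PowerSeries.X : PowerSeries ℂ)^n • x n with hs
  have hcs : ∀ i < m+1, e (w - s) i = 0 := by
    intro i hi
    have hesi : e s i = ∑ n ∈ Finset.range (m+1),
        (if n ≤ i then e (x n) (i - n) else 0) := by
      rw [hs, map_sum, Finset.sum_apply]
      exact Finset.sum_congr rfl fun n _ => aux_coeff_Xpow hsmul (x n) n i
    have h2 : ∑ n ∈ Finset.range (i+1), (if n ≤ i then e (x n) (i - n) else 0)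
        = ∑ n ∈ Finset.range (m+1), (if n ≤ i then e (x n) (i - n) else 0) := by
      refine Finset.sum_subset (Finset.range_subset_range.mpr hi) ?_
      intro n _ hn
      rw [if_neg]
      intro hni
      exact hn (Finset.mem_range.mpr (Nat.lt_succ_of_le hni))
    have h3 : ∑ n ∈ Finset.range (i+1), (if n ≤ i then e (x n) (i - n) else 0)
        = ∑ n ∈ Finset.range (i+1), e (x n) (i - n) :=
      Finset.sum_congr rfl fun n hn => if_pos (Nat.lt_succ_iff.mp (Finset.mem_range.mp hn))
    rw [map_sub, Pi.sub_apply, hrep i, hesi, ← h2, h3, sub_self]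
  obtain ⟨u, hu⟩ := aux_exists_Xpow hsmul (w - s) (m+1) hcs
  have hw : w = s + (PowerSeries.X : PowerSeries ℂ)^(m+1) • u := by
    rw [← hu, add_sub_cancel]
  have hgs : g s = ∑ n ∈ Finset.range (m+1), (PowerSeries.X : PowerSeries ℂ)^n • g (x n) := by
    rw [hs, map_sum]
    exact Finset.sum_congr rfl fun n _ => map_smul g _ _
  rw [hw, map_add, map_smul, map_add, Pi.add_apply, aux_coeff_Xpow hsmul,
    if_neg (by omega), add_zero, hgs, map_sum, Finset.sum_apply]
  refine Finset.sum_congr rfl fun n hn => ?_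
  rw [aux_coeff_Xpow hsmul, if_pos (Nat.lt_succ_iff.mp (Finset.mem_range.mp hn))]

private lemma aux_rep_X
    (hsmul : ∀ (f : PowerSeries ℂ) (w : W) (n : ℕ),
      e (f • w) n = ∑ k ∈ Finset.range (n + 1), PowerSeries.coeff k f • e w (n - k))
    (x : ℕ → W) (w : W)
    (hrep : ∀ m, e w m = ∑ n ∈ Finset.range (m+1), e (x n) (m - n)) (m : ℕ) :
    e ((PowerSeries.X : PowerSeries ℂ) • w) m
      = ∑ n ∈ Finset.range (m+1), e (if n = 0 then 0 else x (n-1)) (m - n) := by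
  rw [aux_coeff_X hsmul]
  cases m with
  | zero => simp
  | succ m =>
    rw [if_pos (Nat.succ_le_succ (Nat.zero_le m)), Nat.succ_sub_one, hrep m]
    conv_rhs => rw [Finset.sum_range_succ']
    simp [Nat.succ_sub_succ]

end Aux
/-- Let `A` be a unital associative ℂ-algebra all of whose modules are
semisimple, acting (via the ring homomorphism `ρ`, extending the ℂ-structure) by
ℂ[[ℏ]]-linear endomorphisms on `W = W₀[[ℏ]]` with `W₀` nonzero. If the only
`A`-invariant, ℏ-saturated, ℏ-adically closed ℂ[[ℏ]]-submodules of `W` are `0` and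
`W`, then there is an `A`-invariant ℂ-subspace `M₀` of `W` which is a simple
`A`-module and such that `(xₙ) ↦ Σₙ ℏⁿxₙ` is a bijection from sequences in `M₀`
onto `W`. -/
theorem statement10 (A : Type) [Ring A] [Algebra ℂ A]
    (hss : ∀ (M : Type) [AddCommGroup M] [Module A M], IsSemisimpleModule A M)
    (W₀ : Type) [AddCommGroup W₀] [Module ℂ W₀] [Nontrivial W₀]
    (W : Type) [AddCommGroup W] [Module (PowerSeries ℂ) W]
    (e : W ≃+ (ℕ → W₀))
    (hsmul : ∀ (f : PowerSeries ℂ) (w : W) (n : ℕ),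
      e (f • w) n = ∑ k ∈ Finset.range (n + 1), PowerSeries.coeff k f • e w (n - k))
    (ρ : A →+* Module.End (PowerSeries ℂ) W)
    (hρC : ∀ (c : ℂ) (w : W), ρ (algebraMap ℂ A c) w = PowerSeries.C c • w)
    (hirr : ∀ N : Submodule (PowerSeries ℂ) W,
      (∀ (a : A), ∀ w ∈ N, ρ a w ∈ N) →
      (∀ w : W, (PowerSeries.X : PowerSeries ℂ) • w ∈ N → w ∈ N) →
      (∀ w : W, (∀ k : ℕ, ∃ n ∈ N, ∃ u : W, w - n = (PowerSeries.X ^ k : PowerSeries ℂ) • u) → w ∈ N) →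
      N = ⊥ ∨ N = ⊤) :
    ∃ M₀ : Set W,
      (0 : W) ∈ M₀ ∧
      (∀ x ∈ M₀, ∀ y ∈ M₀, x + y ∈ M₀) ∧
      (∀ (c : ℂ), ∀ x ∈ M₀, PowerSeries.C c • x ∈ M₀) ∧
      (∀ (a : A), ∀ x ∈ M₀, ρ a x ∈ M₀) ∧
      (∃ x ∈ M₀, x ≠ 0) ∧
      (∀ P : Set W, P ⊆ M₀ → (0 : W) ∈ P → (∀ x ∈ P, ∀ y ∈ P, x + y ∈ P) →
        (∀ (c : ℂ), ∀ x ∈ P, PowerSeries.C c • x ∈ P) →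
        (∀ (a : A), ∀ x ∈ P, ρ a x ∈ P) → P = {0} ∨ P = M₀) ∧
      (∀ x y : ℕ → W, (∀ n, x n ∈ M₀) → (∀ n, y n ∈ M₀) →
        (∀ m : ℕ, ∑ n ∈ Finset.range (m + 1), e (x n) (m - n)
          = ∑ n ∈ Finset.range (m + 1), e (y n) (m - n)) → x = y) ∧
      (∀ w : W, ∃ x : ℕ → W, (∀ n, x n ∈ M₀) ∧
        ∀ m : ℕ, e w m = ∑ n ∈ Finset.range (m + 1), e (x n) (m - n)) := by
  classical
  -- set up the A-module structure on W via ρ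
  letI instS : SMul A W := ⟨fun a w => ρ a w⟩
  have hsdef : ∀ (a : A) (w : W), a • w = ρ a w := fun _ _ => rfl
  letI : MulAction A W :=
    { one_smul := fun w => by rw [hsdef, map_one]; rfl
      mul_smul := fun a b w => by rw [hsdef, hsdef, hsdef, map_mul]; rfl }
  letI : DistribMulAction A W :=
    { smul_zero := fun a => by rw [hsdef]; exact map_zero (ρ a)
      smul_add := fun a x y => by rw [hsdef, hsdef, hsdef]; exact map_add (ρ a) x y }
  letI : Module A W :=
    { add_smul := fun a b w => by rw [hsdef, hsdef, hsdef, map_add]; rfl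
      zero_smul := fun w => by rw [hsdef, map_zero]; rfl }
  haveI : IsSemisimpleModule A W := hss W
  -- the submodule X•W and a complement M₀'
  let T : W →ₗ[A] W :=
    { toFun := fun w => (PowerSeries.X : PowerSeries ℂ) • w
      map_add' := fun x y => smul_add _ x y
      map_smul' := fun a w => by
        rw [RingHom.id_apply, hsdef, hsdef]
        exact (map_smul (ρ a) _ w).symm }
  obtain ⟨M₀', hcompl⟩ := exists_isCompl (LinearMap.range T)
  set S : Set W := (M₀' : Set W) with hSdef
  have hdec : ∀ w : W, ∃ p ∈ S, ∃ r : W, w = p + (PowerSeries.X : PowerSeries ℂ) • r := by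
    intro w
    have hw : w ∈ (LinearMap.range T) ⊔ M₀' := by
      rw [hcompl.codisjoint.eq_top]; trivial
    obtain ⟨y, hy, z, hz, hyz⟩ := Submodule.mem_sup.mp hw
    obtain ⟨r, rfl⟩ := hy
    exact ⟨z, hz, r, by rw [← hyz]; exact add_comm _ _⟩
  have hdisj : ∀ z ∈ S, e z 0 = 0 → z = 0 := by
    intro z hz h0
    obtain ⟨u, hu⟩ := aux_exists_Xpow hsmul z 1 (by intro m hm; interval_cases m; exact h0)
    have hzT : z ∈ LinearMap.range T := ⟨u, by rw [hu, pow_one]; rfl⟩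
    exact Submodule.disjoint_def.mp hcompl.disjoint z hzT hz
  have hsubS : ∀ x ∈ S, ∀ y ∈ S, x - y ∈ S := fun x hx y hy => M₀'.sub_mem hx hy
  -- the coefficient functions
  choose cf hcfmem hcfrep using aux_rep_exists hsmul S hdec
  have htrunc : ∀ (w v u : W) (k : ℕ),
      w - v = (PowerSeries.X : PowerSeries ℂ)^k • u → ∀ i < k, cf w i = cf v i := by
    intro w v u k hk i hik
    refine aux_coeffs_eq S hsubS hdisj _ _ (hcfmem w) (hcfmem v) k ?_ i hik
    intro m hm
    rw [← hcfrep w m, ← hcfrep v m]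
    have h1 : e (w - v) m = 0 := by
      rw [hk, aux_coeff_Xpow hsmul, if_neg (by omega)]
    rw [map_sub, Pi.sub_apply, sub_eq_zero] at h1
    exact h1
  have huniq : ∀ (w : W) (x : ℕ → W), (∀ n, x n ∈ S) →
      (∀ m, e w m = ∑ n ∈ Finset.range (m+1), e (x n) (m - n)) → ∀ n, cf w n = x n := by
    intro w x hx hrep n
    exact aux_coeffs_eq S hsubS hdisj _ _ (hcfmem w) hx (n+1)
      (fun m _ => by rw [← hcfrep w m, ← hrep m]) n (Nat.lt_succ_self n)
  have cf0 : ∀ n, cf (0:W) n = 0 :=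
    huniq 0 (fun _ => 0) (fun _ => M₀'.zero_mem) (by intro m; simp)
  have cfadd : ∀ w w' n, cf (w + w') n = cf w n + cf w' n := by
    intro w w' n
    refine huniq (w+w') (fun n => cf w n + cf w' n)
      (fun n => M₀'.add_mem (hcfmem w n) (hcfmem w' n)) ?_ n
    intro m
    rw [map_add, Pi.add_apply, hcfrep w m, hcfrep w' m, ← Finset.sum_add_distrib]
    exact Finset.sum_congr rfl fun n _ => by rw [map_add, Pi.add_apply]
  have cfsingle : ∀ v ∈ S, ∀ n, cf v n = if n = 0 then v else 0 := by
    intro v hv n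
    refine huniq v (fun n => if n = 0 then v else 0) (fun n => ?_) ?_ n
    · split
      · exact hv
      · exact M₀'.zero_mem
    · intro m
      conv_rhs => rw [Finset.sum_range_succ']
      simp
  have cfglin : ∀ (g : W →ₗ[PowerSeries ℂ] W) (w : W),
      (∀ n, g (cf w n) ∈ S) → ∀ n, cf (g w) n = g (cf w n) :=
    fun g w hmem n => huniq (g w) _ hmem (aux_rep_glin hsmul g (cf w) w (hcfrep w)) n
  have cfρ : ∀ (a : A) (w : W) (n : ℕ), cf (ρ a w) n = ρ a (cf w n) := by
    intro a w n
    refine cfglin (ρ a) w (fun n => ?_) n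
    have := M₀'.smul_mem a (hcfmem w n)
    rwa [hsdef] at this
  have hMC : ∀ (c : ℂ), ∀ x ∈ S, (PowerSeries.C c) • x ∈ S := by
    intro c x hx
    have := M₀'.smul_mem (algebraMap ℂ A c) hx
    rwa [hsdef, hρC] at this
  have cfC : ∀ (c : ℂ) (w : W) (n : ℕ),
      cf ((PowerSeries.C c) • w) n = (PowerSeries.C c) • cf w n := by
    intro c w n
    let g : W →ₗ[PowerSeries ℂ] W :=
      { toFun := fun v => (PowerSeries.C c) • v
        map_add' := fun x y => smul_add _ x y
        map_smul' := fun f v => by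
          show (PowerSeries.C c) • (f • v) = f • ((PowerSeries.C c) • v)
          rw [smul_smul, smul_smul, mul_comm] }
    exact cfglin g w (fun n => hMC c _ (hcfmem w n)) n
  have cfX : ∀ (w : W) (n : ℕ),
      cf ((PowerSeries.X : PowerSeries ℂ) • w) n = if n = 0 then 0 else cf w (n-1) := by
    intro w n
    refine huniq _ _ (fun n => ?_) (aux_rep_X hsmul (cf w) w (hcfrep w)) n
    split
    · exact M₀'.zero_mem
    · exact hcfmem w _
  have cfXpow : ∀ (j : ℕ) (w : W) (n : ℕ),
      cf ((PowerSeries.X : PowerSeries ℂ)^j • w) n = if n < j then 0 else cf w (n - j) := by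
    intro j
    induction j with
    | zero => intro w n; simp
    | succ j IH =>
      intro w n
      rw [pow_succ, mul_comm, mul_smul, cfX]
      cases n with
      | zero => simp
      | succ n =>
        rw [if_neg (Nat.succ_ne_zero n), Nat.succ_sub_one, IH w n]
        simp only [Nat.add_lt_add_iff_right, Nat.succ_sub_succ]
  have happrox : ∀ (P : Set W) (w : W),
      (∀ k : ℕ, ∃ v : W, (∀ i, cf v i ∈ P) ∧
        ∃ u, w - v = (PowerSeries.X : PowerSeries ℂ)^k • u) → ∀ i, cf w i ∈ P := by
    intro P w h i
    obtain ⟨v, hv, u, hu⟩ := h (i+1)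
    rw [htrunc w v u (i+1) hu i (Nat.lt_succ_self i)]
    exact hv i
  refine ⟨S, M₀'.zero_mem, fun x hx y hy => M₀'.add_mem hx hy, hMC,
    fun a x hx => by have := M₀'.smul_mem a hx; rwa [hsdef] at this, ?_, ?_, ?_, ?_⟩
  · -- existence of a nonzero element
    by_contra hno
    push_neg at hno
    obtain ⟨w₀, hw₀⟩ := exists_ne (0 : W₀)
    have h1 : e (e.symm (fun _ => w₀)) 0 = w₀ := by rw [e.apply_symm_apply]
    have h2 : e (e.symm (fun _ => w₀)) 0 = 0 := by
      rw [hcfrep (e.symm (fun _ => w₀)) 0, Finset.sum_range_one,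
        hno _ (hcfmem (e.symm (fun _ => w₀)) 0), map_zero]
      rfl
    exact hw₀ (h1 ▸ h2)
  · -- simplicity
    intro P hPsub hP0 hPadd hPC hPA
    have hPsum : ∀ (s : Finset ℕ) (g : ℕ → W),
        (∀ j ∈ s, ∀ i, cf (g j) i ∈ P) → ∀ i, cf (∑ j ∈ s, g j) i ∈ P := by
      intro s
      induction s using Finset.induction_on with
      | empty => intro g _ i; rw [Finset.sum_empty, cf0 i]; exact hP0
      | insert j s hj IH =>
        intro g hg i
        rw [Finset.sum_insert hj, cfadd]
        exact hPadd _ (hg _ (Finset.mem_insert_self _ _) i) _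
          (IH g (fun j hjs => hg j (Finset.mem_insert_of_mem hjs)) i)
    let NP : Submodule (PowerSeries ℂ) W :=
      { carrier := {w | ∀ n, cf w n ∈ P}
        zero_mem' := fun n => by rw [cf0 n]; exact hP0
        add_mem' := fun {w w'} hw hw' n => by rw [cfadd]; exact hPadd _ (hw n) _ (hw' n)
        smul_mem' := by
          intro f w hw
          refine happrox P _ (fun k => ?_)
          refine ⟨(∑ j ∈ Finset.range k,
            PowerSeries.C (PowerSeries.coeff j f) * (PowerSeries.X : PowerSeries ℂ)^j) • w,
            ?_, ?_⟩
          · rw [Finset.sum_smul]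
            refine hPsum _ _ (fun j hj i => ?_)
            rw [mul_smul, cfC, cfXpow]
            split
            · rw [smul_zero]; exact hP0
            · exact hPC _ _ (hw _)
          · have hdvd : (PowerSeries.X : PowerSeries ℂ)^k ∣
                f - ∑ j ∈ Finset.range k,
                  PowerSeries.C (PowerSeries.coeff j f) * (PowerSeries.X : PowerSeries ℂ)^j := by
              rw [PowerSeries.X_pow_dvd_iff]
              intro m hm
              rw [map_sub, map_sum, sub_eq_zero]
              have hterm : ∀ j ∈ Finset.range k,
                  PowerSeries.coeff m (PowerSeries.C (PowerSeries.coeff j f)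
                    * (PowerSeries.X : PowerSeries ℂ)^j)
                  = if j = m then PowerSeries.coeff m f else 0 := by
                intro j _
                rw [PowerSeries.coeff_C_mul, PowerSeries.coeff_X_pow]
                by_cases h : j = m
                · subst h; simp
                · rw [if_neg h, if_neg (fun hh => h hh.symm), mul_zero]
              rw [Finset.sum_congr rfl hterm,
                Finset.sum_ite_eq' (Finset.range k) m (fun _ => PowerSeries.coeff m f),
                if_pos (Finset.mem_range.mpr hm)]
            obtain ⟨g, hg⟩ := hdvd
            exact ⟨g • w, by rw [← sub_smul, hg, mul_smul]⟩ }
    have hNPmem : ∀ w : W, w ∈ NP ↔ ∀ n, cf w n ∈ P := fun w => Iff.rfl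
    rcases hirr NP
      (fun a w hw n => by rw [cfρ]; exact hPA a _ ((hNPmem w).mp hw n))
      (fun w hw n => by
        have := (hNPmem _).mp hw (n+1)
        rwa [cfX, if_neg (Nat.succ_ne_zero n), Nat.succ_sub_one] at this)
      (fun w hw => (hNPmem w).mpr (happrox P w (fun k => by
        obtain ⟨v, hv, u, hu⟩ := hw k
        exact ⟨v, (hNPmem v).mp hv, u, hu⟩)))
      with hbot | htop
    · left
      refine Set.eq_singleton_iff_unique_mem.mpr ⟨hP0, fun y hy => ?_⟩
      have hyNP : y ∈ NP := by
        refine (hNPmem y).mpr (fun n => ?_)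
        rw [cfsingle y (hPsub hy) n]
        split
        · exact hy
        · exact hP0
      rw [hbot] at hyNP
      exact (Submodule.mem_bot _).mp hyNP
    · right
      refine Set.Subset.antisymm hPsub (fun y hy => ?_)
      have hyNP : y ∈ NP := by rw [htop]; trivial
      have := (hNPmem y).mp hyNP 0
      rwa [cfsingle y hy 0, if_pos rfl] at this
  · -- uniqueness of coefficient sequences
    intro x y hx hy hxy
    funext n
    exact aux_coeffs_eq S hsubS hdisj x y hx hy (n+1) (fun m _ => hxy m) n (Nat.lt_succ_self n)
  · -- existence of coefficient sequences
    exact fun w => ⟨cf w, hcfmem w, hcfrep w⟩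
end

section
/- Let A be a unital associative ℂ-algebra such that every A-module is semisimple. Let W₀ be a ℂ-vector space and suppose W = W₀[[ℏ]] carries an A-module structure extending its ℂ-vector space structure such that every a ∈ A acts as a ℂ[[ℏ]]-linear endomorphism of W. Let N be a ℂ[[ℏ]]-submodule of W that is A-invariant, ℏ-saturated, and ℏ-adically closed. Then there exists a ℂ[[ℏ]]-submodule N″ of W, also A-invariant, ℏ-saturated, and ℏ-adically closed, such that W = N ⊕ N″. -/
/-- Let `A` be a unital associative ℂ-algebra all of whose modules are
semisimple, acting (via `ρ`, extending the ℂ-structure) by ℂ[[ℏ]]-linear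
endomorphisms on `W = W₀[[ℏ]]`. Every `A`-invariant, ℏ-saturated, ℏ-adically closed
ℂ[[ℏ]]-submodule `N` of `W` has an `A`-invariant, ℏ-saturated, ℏ-adically closed
complement `N″` with `W = N ⊕ N″`. -/
theorem statement11 (A : Type) [Ring A] [Algebra ℂ A]
    (hss : ∀ (M : Type) [AddCommGroup M] [Module A M], IsSemisimpleModule A M)
    (W₀ : Type) [AddCommGroup W₀] [Module ℂ W₀]
    (W : Type) [AddCommGroup W] [Module (PowerSeries ℂ) W]
    (e : W ≃+ (ℕ → W₀))
    (hsmul : ∀ (f : PowerSeries ℂ) (w : W) (n : ℕ),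
      e (f • w) n = ∑ k ∈ Finset.range (n + 1), PowerSeries.coeff (R := ℂ) k f • e w (n - k))
    (ρ : A →+* Module.End (PowerSeries ℂ) W)
    (hρC : ∀ (c : ℂ) (w : W), ρ (algebraMap ℂ A c) w = PowerSeries.C (R := ℂ) c • w)
    (N : Submodule (PowerSeries ℂ) W)
    (hNA : ∀ (a : A), ∀ w ∈ N, ρ a w ∈ N)
    (hsat : ∀ w : W, (PowerSeries.X : PowerSeries ℂ) • w ∈ N → w ∈ N)
    (hclosed : ∀ w : W,
      (∀ k : ℕ, ∃ n ∈ N, ∃ u : W, w - n = (PowerSeries.X ^ k : PowerSeries ℂ) • u) → w ∈ N) :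
    ∃ N'' : Submodule (PowerSeries ℂ) W,
      (∀ (a : A), ∀ w ∈ N'', ρ a w ∈ N'') ∧
      (∀ w : W, (PowerSeries.X : PowerSeries ℂ) • w ∈ N'' → w ∈ N'') ∧
      (∀ w : W, (∀ k : ℕ, ∃ n ∈ N'', ∃ u : W, w - n = (PowerSeries.X ^ k : PowerSeries ℂ) • u) → w ∈ N'') ∧
      N ⊓ N'' = ⊥ ∧ N ⊔ N'' = ⊤ := by
  classical
  -- the `A`-module structure on `W`
  letI mA : Module A W := Module.compHom W ρ
  have hsmulA : ∀ (a : A) (w : W), a • w = ρ a w := fun a w => rfl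
  have hAf : ∀ (a : A) (f : PowerSeries ℂ) (w : W), ρ a (f • w) = f • ρ a w :=
    fun a f w => (ρ a).map_smul f w
  -- coefficients of `X • w`
  have heX : ∀ (w : W) (n : ℕ),
      e ((PowerSeries.X : PowerSeries ℂ) • w) n = if n = 0 then 0 else e w (n - 1) := by
    intro w n
    rw [hsmul]
    rcases n with _ | m
    · simp
    · rw [Finset.sum_eq_single 1]
      · simp
      · intro j _ hj1
        rw [PowerSeries.coeff_X, if_neg hj1, zero_smul]
      · intro hmem; exact absurd (Finset.mem_range.2 (by omega)) hmem
  have heXpow : ∀ (k : ℕ) (w : W) (n : ℕ),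
      e ((PowerSeries.X ^ k : PowerSeries ℂ) • w) n = if n < k then 0 else e w (n - k) := by
    intro k
    induction k with
    | zero => intro w n; simp
    | succ k ih =>
      intro w n
      rw [pow_succ', mul_smul, heX]
      rcases n with _ | m
      · simp
      · rw [if_neg (Nat.succ_ne_zero m), Nat.succ_sub_one, ih]
        by_cases h : m < k
        · rw [if_pos h, if_pos (by omega)]
        · rw [if_neg h, if_neg (by omega)]
          have h2 : m + 1 - (k + 1) = m - k := by omega
          rw [h2]
  have hXinj : ∀ w : W, (PowerSeries.X : PowerSeries ℂ) • w = 0 → w = 0 := by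
    intro w hw
    apply e.injective
    funext n
    have := heX w (n + 1)
    rw [hw, map_zero] at this
    simpa using this.symm
  -- the submodules `H k = X^k • W`
  let H : ℕ → Submodule A W := fun k =>
    { carrier := {w | ∃ u : W, w = (PowerSeries.X ^ k : PowerSeries ℂ) • u}
      zero_mem' := ⟨0, by rw [smul_zero]⟩
      add_mem' := by
        rintro x y ⟨u, rfl⟩ ⟨v, rfl⟩
        exact ⟨u + v, by rw [smul_add]⟩
      smul_mem' := by
        rintro a x ⟨u, rfl⟩
        exact ⟨a • u, by rw [hsmulA, hsmulA, hAf]⟩ }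
  have hHmem : ∀ (k : ℕ) (w : W),
      w ∈ H k ↔ ∃ u : W, w = (PowerSeries.X ^ k : PowerSeries ℂ) • u := fun k w => Iff.rfl
  have hHcoeff : ∀ (k : ℕ) (w : W), w ∈ H k ↔ ∀ n < k, e w n = 0 := by
    intro k w
    constructor
    · rintro ⟨u, rfl⟩ n hn
      rw [heXpow, if_pos hn]
    · intro hcf
      refine ⟨e.symm (fun n => e w (n + k)), e.injective ?_⟩
      funext n
      rw [heXpow]
      by_cases h : n < k
      · rw [if_pos h]; exact hcf n h
      · rw [if_neg h, e.apply_symm_apply]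
        have h2 : n - k + k = n := by omega
        rw [h2]
  have hHanti : ∀ (j k : ℕ), k ≤ j → H j ≤ H k := by
    intro j k hkj w hw
    rw [hHcoeff] at hw ⊢
    exact fun n hn => hw n (lt_of_lt_of_le hn hkj)
  have hH0 : H 0 = ⊤ := by
    rw [eq_top_iff]
    intro w _
    rw [hHcoeff]
    exact fun n hn => absurd hn (Nat.not_lt_zero n)
  -- `N` as an `A`-submodule
  let NA : Submodule A W :=
    { carrier := N
      zero_mem' := N.zero_mem
      add_mem' := fun hx hy => N.add_mem hx hy
      smul_mem' := fun a w hw => by rw [hsmulA]; exact hNA a w hw }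
  have hNAmem : ∀ w : W, w ∈ NA ↔ w ∈ N := fun w => Iff.rfl
  -- multiplication by `X` as an `A`-linear map
  let h : W →ₗ[A] W :=
    { toFun := fun w => (PowerSeries.X : PowerSeries ℂ) • w
      map_add' := fun x y => smul_add _ x y
      map_smul' := fun a w => by simp only [RingHom.id_apply, hsmulA, hAf] }
  -- the invariant for the recursive construction
  let Inv : ℕ → Submodule A W → Prop := fun k C =>
    Submodule.map h C ≤ C ∧ H k ≤ C ∧ (NA ⊔ H k) ⊓ C = H k ∧ NA ⊔ C = ⊤
  -- the key step
  have step : ∀ (k : ℕ) (C : Submodule A W), Inv k C →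
      ∃ C', Inv (k + 1) C' ∧ C' ≤ C := by
    intro k C hC
    obtain ⟨hX, hH, hNC, hNsup⟩ := hC
    set S : Submodule A W := Submodule.map h C ⊔ H (k + 1) with hS_def
    set P : Submodule A W := C ⊓ (NA ⊔ H (k + 1)) with hP_def
    have hSle : S ≤ C := sup_le hX (le_trans (hHanti (k+1) k (by omega)) hH)
    have hPle : P ≤ C := inf_le_left
    -- key: `P ⊓ S ≤ H (k+1)`
    have key : ∀ x : W, x ∈ P → x ∈ S → x ∈ H (k + 1) := by
      intro x hxP hxS
      obtain ⟨y, hy, v, hv, hxyv⟩ := Submodule.mem_sup.mp hxS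
      obtain ⟨c, hc, rfl⟩ := hy
      obtain ⟨u, rfl⟩ := (hHmem _ _).mp hv
      obtain ⟨hxC, hxNH⟩ := Submodule.mem_inf.mp hxP
      obtain ⟨n, hn, v', hv', hxnv⟩ := Submodule.mem_sup.mp hxNH
      obtain ⟨u', rfl⟩ := (hHmem _ _).mp hv'
      -- h c = X • c
      have hhc : h c = (PowerSeries.X : PowerSeries ℂ) • c := rfl
      rw [hhc] at hxyv
      have hXc : (PowerSeries.X : PowerSeries ℂ) • c =
          x - (PowerSeries.X ^ (k + 1) : PowerSeries ℂ) • u := by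
        rw [← hxyv]; abel
      have hn' : n = x - (PowerSeries.X ^ (k + 1) : PowerSeries ℂ) • u' := by
        rw [← hxnv]; abel
      have heq1 : (PowerSeries.X : PowerSeries ℂ) •
          (c - (PowerSeries.X ^ k : PowerSeries ℂ) • (u' - u)) = n := by
        have expand : (PowerSeries.X : PowerSeries ℂ) •
            (c - (PowerSeries.X ^ k : PowerSeries ℂ) • (u' - u)) =
            (PowerSeries.X : PowerSeries ℂ) • c -
              (PowerSeries.X ^ (k + 1) : PowerSeries ℂ) • (u' - u) := by
          rw [smul_sub, ← mul_smul, ← pow_succ']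
        rw [expand, hXc, hn', smul_sub]
        abel
      have hmemN : c - (PowerSeries.X ^ k : PowerSeries ℂ) • (u' - u) ∈ N :=
        hsat _ (by rw [heq1]; exact hn)
      have hmemC : c - (PowerSeries.X ^ k : PowerSeries ℂ) • (u' - u) ∈ C :=
        C.sub_mem hc (hH ((hHmem _ _).mpr ⟨u' - u, rfl⟩))
      have hmemH : c - (PowerSeries.X ^ k : PowerSeries ℂ) • (u' - u) ∈ H k := by
        rw [← hNC]
        exact Submodule.mem_inf.mpr ⟨Submodule.mem_sup_left hmemN, hmemC⟩
      obtain ⟨y0, hy0⟩ := (hHmem _ _).mp hmemH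
      rw [sub_eq_iff_eq_add] at hy0
      refine (hHmem _ _).mpr ⟨y0 + (u' - u) + u, ?_⟩
      have hXc2 : (PowerSeries.X : PowerSeries ℂ) • c =
          (PowerSeries.X ^ (k + 1) : PowerSeries ℂ) • y0 +
            (PowerSeries.X ^ (k + 1) : PowerSeries ℂ) • (u' - u) := by
        rw [hy0, smul_add, ← mul_smul, ← mul_smul, ← pow_succ']
      rw [← hxyv, hXc2, smul_add, smul_add]
    -- a complement inside `C` via semisimplicity
    haveI := hss ↥C
    obtain ⟨E', hE'⟩ := exists_isCompl ((S ⊔ P).comap C.subtype)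
    set E : Submodule A W := E'.map C.subtype with hE_def
    have hEleC : E ≤ C := Submodule.map_subtype_le C E'
    set C' : Submodule A W := S ⊔ E with hC'_def
    have hC'leC : C' ≤ C := sup_le hSle hEleC
    have hSleC' : S ≤ C' := le_sup_left
    have hHC' : H (k + 1) ≤ C' := le_trans le_sup_right hSleC'
    -- `S ⊔ P ⊔ E = C`
    have hmapEq : (S ⊔ P) ⊔ E = C := by
      have h1 : Submodule.map C.subtype (((S ⊔ P).comap C.subtype) ⊔ E') =
          Submodule.map C.subtype ⊤ := by rw [hE'.sup_eq_top]
      rw [Submodule.map_sup, Submodule.map_comap_subtype, Submodule.map_subtype_top] at h1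
      rw [← h1, inf_eq_right.mpr (sup_le hSle hPle)]
    refine ⟨C', ⟨?_, hHC', ?_, ?_⟩, hC'leC⟩
    · -- map h C' ≤ C'
      exact le_trans (Submodule.map_mono hC'leC) (le_trans le_sup_left hSleC')
    · -- (NA ⊔ H (k+1)) ⊓ C' = H (k+1)
      apply le_antisymm
      · rintro x hx
        obtain ⟨hxNH, hxC'⟩ := Submodule.mem_inf.mp hx
        obtain ⟨s, hs, e0, he0, hxse⟩ := Submodule.mem_sup.mp hxC'
        have hxC : x ∈ C := hC'leC hxC'
        have hxP : x ∈ P := Submodule.mem_inf.mpr ⟨hxC, hxNH⟩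
        -- e0 ∈ E ⊓ (S ⊔ P) = ⊥
        have he0SP : e0 ∈ S ⊔ P := by
          have : e0 = x - s := by rw [← hxse]; abel
          rw [this]
          exact Submodule.sub_mem _ (Submodule.mem_sup_right hxP) (Submodule.mem_sup_left hs)
        have he0C : e0 ∈ C := hEleC he0
        obtain ⟨y, hyE', hy⟩ := he0
        have hyG : y ∈ (S ⊔ P).comap C.subtype := by
          rw [Submodule.mem_comap]
          rw [show (C.subtype y : W) = e0 from hy]
          exact he0SP
        have : y = 0 := by
          have := hE'.inf_eq_bot
          have hmem : y ∈ ((S ⊔ P).comap C.subtype) ⊓ E' := Submodule.mem_inf.mpr ⟨hyG, hyE'⟩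
          rw [this] at hmem
          exact (Submodule.mem_bot _).mp hmem
        have he00 : e0 = 0 := by rw [← hy, this]; simp
        have hxs : x = s := by rw [← hxse, he00, add_zero]
        exact key x hxP (by rw [hxs]; exact hs)
      · exact le_inf le_sup_right hHC'
    · -- NA ⊔ C' = ⊤
      have hEleC' : E ≤ C' := by rw [hC'_def]; exact le_sup_right
      have hPleNC : P ≤ NA ⊔ C' := le_trans inf_le_right (sup_le_sup_left hHC' NA)
      have hCle : C ≤ NA ⊔ C' := by
        rw [← hmapEq]
        refine sup_le (sup_le ?_ ?_) ?_
        · exact le_trans hSleC' le_sup_right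
        · exact hPleNC
        · exact le_trans hEleC' le_sup_right
      rw [eq_top_iff, ← hNsup]
      exact sup_le le_sup_left hCle
  -- the recursive sequence of complements
  have hInvTop : Inv 0 (⊤ : Submodule A W) := by
    refine ⟨le_top, le_top, ?_, ?_⟩
    · rw [hH0]; simp
    · simp
  let CseqP : (k : ℕ) → {C : Submodule A W // Inv k C} := fun k =>
    Nat.rec ⟨⊤, hInvTop⟩
      (fun k p => ⟨(step k p.1 p.2).choose, (step k p.1 p.2).choose_spec.1⟩) k
  let Cseq : ℕ → Submodule A W := fun k => (CseqP k).1
  have hInvAll : ∀ k, Inv k (Cseq k) := fun k => (CseqP k).2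
  have hsucc : ∀ k, Cseq (k + 1) ≤ Cseq k := fun k =>
    (step k (CseqP k).1 (CseqP k).2).choose_spec.2
  have hCanti : ∀ (j k : ℕ), k ≤ j → Cseq j ≤ Cseq k := by
    intro j
    induction j with
    | zero => intro k hk; rw [Nat.le_zero.mp hk]
    | succ j ih =>
      intro k hk
      rcases Nat.lt_or_ge k (j + 1) with hlt | hge
      · exact le_trans (hsucc j) (ih k (by omega))
      · rw [show k = j + 1 by omega]
  -- basic stability of `Cseq k`
  have hCX : ∀ (k : ℕ) (w : W), w ∈ Cseq k → (PowerSeries.X : PowerSeries ℂ) • w ∈ Cseq k := by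
    intro k w hw
    exact (hInvAll k).1 ⟨w, hw, rfl⟩
  have hCXpow : ∀ (j k : ℕ) (w : W), w ∈ Cseq k →
      (PowerSeries.X ^ j : PowerSeries ℂ) • w ∈ Cseq k := by
    intro j
    induction j with
    | zero => intro k w hw; rw [pow_zero, one_smul]; exact hw
    | succ j ih =>
      intro k w hw
      rw [pow_succ', mul_smul]
      exact hCX k _ (ih k w hw)
  have hCC : ∀ (c : ℂ) (k : ℕ) (w : W), w ∈ Cseq k →
      (PowerSeries.C (R := ℂ) c : PowerSeries ℂ) • w ∈ Cseq k := by
    intro c k w hw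
    rw [← hρC, ← hsmulA]
    exact (Cseq k).smul_mem _ hw
  have hCf : ∀ (f : PowerSeries ℂ) (k : ℕ) (w : W), w ∈ Cseq k → f • w ∈ Cseq k := by
    intro f k w hw
    set T : PowerSeries ℂ :=
      ∑ j ∈ Finset.range k, PowerSeries.C (R := ℂ) (PowerSeries.coeff (R := ℂ) j f) * PowerSeries.X ^ j
      with hT_def
    have hTcoeff : ∀ m, m < k → PowerSeries.coeff (R := ℂ) m T = PowerSeries.coeff (R := ℂ) m f := by
      intro m hm
      rw [hT_def, map_sum]
      rw [Finset.sum_eq_single m]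
      · rw [PowerSeries.coeff_C_mul, PowerSeries.coeff_X_pow, if_pos rfl, mul_one]
      · intro j _ hj
        rw [PowerSeries.coeff_C_mul, PowerSeries.coeff_X_pow, if_neg (Ne.symm hj), mul_zero]
      · intro hmem; exact absurd (Finset.mem_range.2 hm) hmem
    obtain ⟨g, hg⟩ := PowerSeries.X_pow_dvd_iff.mpr
      (fun m hm => by rw [map_sub, hTcoeff m hm, sub_self] : ∀ m < k, PowerSeries.coeff (R := ℂ) m (f - T) = 0)
    have hfw : f • w = (f - T) • w + T • w := by rw [sub_smul, sub_add_cancel]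
    rw [hfw]
    apply (Cseq k).add_mem
    · rw [hg, mul_smul]
      exact (hInvAll k).2.1 ((hHmem _ _).mpr ⟨g • w, rfl⟩)
    · rw [hT_def, Finset.sum_smul]
      apply Submodule.sum_mem
      intro j _
      rw [mul_smul]
      exact hCC _ k _ (hCXpow j k w hw)
  -- the complement as a `ℂ[[ℏ]]`-submodule
  let N'' : Submodule (PowerSeries ℂ) W :=
    { carrier := {w | ∀ k, w ∈ Cseq k}
      zero_mem' := fun k => (Cseq k).zero_mem
      add_mem' := fun hx hy k => (Cseq k).add_mem (hx k) (hy k)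
      smul_mem' := fun f w hw k => hCf f k w (hw k) }
  have hN''mem : ∀ w : W, w ∈ N'' ↔ ∀ k, w ∈ Cseq k := fun w => Iff.rfl
  -- N ⊓ N'' = ⊥
  have hinf : N ⊓ N'' = ⊥ := by
    rw [eq_bot_iff]
    intro w hw
    obtain ⟨hwN, hwN''⟩ := Submodule.mem_inf.mp hw
    rw [Submodule.mem_bot]
    apply e.injective
    funext n
    have hwH : w ∈ H (n + 1) := by
      rw [← (hInvAll (n + 1)).2.2.1]
      exact Submodule.mem_inf.mpr ⟨Submodule.mem_sup_left hwN, hwN'' (n + 1)⟩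
    rw [map_zero]
    exact (hHcoeff _ _).mp hwH n (by omega)
  -- N ⊔ N'' = ⊤
  have hsup : N ⊔ N'' = ⊤ := by
    rw [eq_top_iff]
    intro w _
    -- approximations
    have happrox : ∀ k, ∃ n, n ∈ N ∧ w - n ∈ Cseq k := by
      intro k
      have : w ∈ NA ⊔ Cseq k := by rw [(hInvAll k).2.2.2]; trivial
      obtain ⟨n, hn, c, hc, hw⟩ := Submodule.mem_sup.mp this
      exact ⟨n, hn, by rw [← hw]; simpa using hc⟩
    choose nseq hnN hnC using happrox
    have hdiff : ∀ (j k : ℕ), k ≤ j → nseq j - nseq k ∈ H k := by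
      intro j k hkj
      rw [← (hInvAll k).2.2.1]
      refine Submodule.mem_inf.mpr ⟨Submodule.mem_sup_left (N.sub_mem (hnN j) (hnN k)), ?_⟩
      have : nseq j - nseq k = (w - nseq k) - (w - nseq j) := by abel
      rw [this]
      exact (Cseq k).sub_mem (hnC k) (hCanti j k hkj (hnC j))
    set n : W := e.symm (fun m => e (nseq (m + 1)) m) with hn_def
    have hnH : ∀ k, n - nseq k ∈ H k := by
      intro k
      rw [hHcoeff]
      intro m hm
      have h1 : e n m = e (nseq (m + 1)) m := by rw [hn_def, e.apply_symm_apply]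
      have h2 : e (nseq k) m = e (nseq (m + 1)) m := by
        have hmem := hdiff k (m + 1) (by omega)
        rw [hHcoeff] at hmem
        have h3 := hmem m (by omega)
        rw [map_sub, Pi.sub_apply] at h3
        exact sub_eq_zero.mp h3
      rw [map_sub, Pi.sub_apply, h1, h2, sub_self]
    have hnN' : n ∈ N := by
      apply hclosed
      intro k
      obtain ⟨u, hu⟩ := (hHmem _ _).mp (hnH k)
      exact ⟨nseq k, hnN k, u, hu⟩
    have hwn : w - n ∈ N'' := by
      rw [hN''mem]
      intro k
      have hre : w - n = (w - nseq k) - (n - nseq k) := by abel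
      rw [hre]
      exact (Cseq k).sub_mem (hnC k) ((hInvAll k).2.1 (hnH k))
    exact Submodule.mem_sup.mpr ⟨n, hnN', w - n, hwn, by abel⟩
  -- conclusion
  refine ⟨N'', ?_, ?_, ?_, hinf, hsup⟩
  · -- A-invariance
    intro a w hw
    rw [hN''mem] at hw ⊢
    intro k
    show ρ a w ∈ Cseq k
    rw [← hsmulA]
    exact (Cseq k).smul_mem a (hw k)
  · -- ℏ-saturation
    intro w hw
    have hwT : w ∈ N ⊔ N'' := by rw [hsup]; trivial
    obtain ⟨nn, hnn, c, hc, hplus⟩ := Submodule.mem_sup.mp hwT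
    have hXn : (PowerSeries.X : PowerSeries ℂ) • nn =
        (PowerSeries.X : PowerSeries ℂ) • w - (PowerSeries.X : PowerSeries ℂ) • c := by
      rw [← hplus, smul_add]
      abel
    have hXnN'' : (PowerSeries.X : PowerSeries ℂ) • nn ∈ N'' := by
      rw [hXn]
      exact N''.sub_mem hw (N''.smul_mem _ hc)
    have hXnN : (PowerSeries.X : PowerSeries ℂ) • nn ∈ N := N.smul_mem _ hnn
    have : (PowerSeries.X : PowerSeries ℂ) • nn ∈ N ⊓ N'' := Submodule.mem_inf.mpr ⟨hXnN, hXnN''⟩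
    rw [hinf, Submodule.mem_bot] at this
    have hnn0 : nn = 0 := hXinj nn this
    rw [← hplus, hnn0, zero_add]
    exact hc
  · -- ℏ-adic closedness
    intro w hwapp
    rw [hN''mem]
    intro k
    obtain ⟨nn, hnn, u, hu⟩ := hwapp k
    have hre : w = nn + (PowerSeries.X ^ k : PowerSeries ℂ) • u := by
      rw [← hu]
      abel
    rw [hre]
    exact (Cseq k).add_mem ((hN''mem nn).mp hnn k) ((hInvAll k).2.1 ((hHmem _ _).mpr ⟨u, rfl⟩))
end
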